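/- arXiv:2405.12148 — 3 statements merged into one kernel-verified Lean document; each statement's English description precedes it below -/
import Mathlib

section
/- Let d ≥ 1, let Ω ⊂ ℝ^d be a bounded C² domain with outward unit normal ν, let β > 0, and let v : Ω → ℝ^d be a bounded measurable vector field. Let (λ, φ) be a Robin eigenpair for (Ω, v, β) and let (μ, ψ) be a Dirichlet eigenpair for (Ω, v). Then λ < μ. -/
open MeasureTheory Metric Filter
open scoped RealInnerProductSpace Topology

noncomputable section

abbrev Euc (d : ℕ) := EuclideanSpace ℝ (Fin d)

variable {d : ℕ}

/-- The Laplacian of `f : Euc d → ℝ`, as the sum of the second derivatives in the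
coordinate directions. -/
def lap (f : Euc d → ℝ) (x : Euc d) : ℝ :=
  ∑ i : Fin d,
    fderiv ℝ (fun y => fderiv ℝ f y (EuclideanSpace.single i 1)) x (EuclideanSpace.single i 1)

/-- `Ω ⊂ ℝ^d` is a bounded `C²` domain with outward unit normal `ν`. -/
def IsBoundedC2Domain (Ω : Set (Euc d)) (ν : Euc d → Euc d) : Prop :=
  Ω.Nonempty ∧ IsOpen Ω ∧ Bornology.IsBounded Ω ∧ IsConnected Ω ∧
    ∀ x ∈ frontier Ω, ∃ r : ℝ, 0 < r ∧ ∃ Φ : Euc d → ℝ, ContDiff ℝ 2 Φ ∧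
      (∀ y ∈ ball x r, gradient Φ y ≠ 0) ∧
      (Ω ∩ ball x r = {y | y ∈ ball x r ∧ Φ y < 0}) ∧
      (frontier Ω ∩ ball x r = {y | y ∈ ball x r ∧ Φ y = 0}) ∧
      (∀ y ∈ frontier Ω ∩ ball x r, ν y = ‖gradient Φ y‖⁻¹ • gradient Φ y)

/-- `G` is a continuous extension to the closure of `Ω` of the gradient of `φ`. -/
def GradExt (Ω : Set (Euc d)) (φ : Euc d → ℝ) (G : Euc d → Euc d) : Prop :=
  ContinuousOn G (closure Ω) ∧ ∀ x ∈ Ω, G x = gradient φ x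

/-- `(lam, φ)` is a Robin eigenpair for `(Ω, v, β)`, where `ν` is the outward unit
normal of `Ω`. -/
def IsRobinEigenpair (Ω : Set (Euc d)) (ν v : Euc d → Euc d) (β lam : ℝ)
    (φ : Euc d → ℝ) : Prop :=
  ContinuousOn φ (closure Ω) ∧ ContDiffOn ℝ 2 φ Ω ∧
    (∀ x ∈ Ω, 0 < φ x) ∧
    (∀ x ∈ Ω, -lap φ x + ⟪v x, gradient φ x⟫ = lam * φ x) ∧
    ∃ G : Euc d → Euc d, GradExt Ω φ G ∧
      ∀ x ∈ frontier Ω, ⟪G x, ν x⟫ + β * φ x = 0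

/-- `(μ, ψ)` is a Dirichlet eigenpair for `(Ω, v)`. -/
def IsDirichletEigenpair (Ω : Set (Euc d)) (v : Euc d → Euc d) (μ : ℝ)
    (ψ : Euc d → ℝ) : Prop :=
  ContinuousOn ψ (closure Ω) ∧ ContDiffOn ℝ 2 ψ Ω ∧
    (∀ x ∈ Ω, 0 < ψ x) ∧ (∀ x ∈ frontier Ω, ψ x = 0) ∧
    (∀ x ∈ Ω, -lap ψ x + ⟪v x, gradient ψ x⟫ = μ * ψ x)

/-- The radial unit vector field `e_r(x) = x / |x|` (with `e_r(0) = 0`). -/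
def er (x : Euc d) : Euc d := ‖x‖⁻¹ • x

/-- The supremum of `φ` over the closure of `Ω` equals `1`. -/
def SupOne (Ω : Set (Euc d)) (φ : Euc d → ℝ) : Prop :=
  sSup (φ '' closure Ω) = 1

/-- The maximum of `φ` over the closure of `Ω` equals `1`. -/
def MaxOne (Ω : Set (Euc d)) (φ : Euc d → ℝ) : Prop :=
  (∀ x ∈ closure Ω, φ x ≤ 1) ∧ ∃ x ∈ closure Ω, φ x = 1


open Set

lemma inner_grad (f : Euc d → ℝ) (x w : Euc d) : ⟪gradient f x, w⟫ = fderiv ℝ f x w := by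
  rw [gradient]; exact InnerProductSpace.toDual_symm_apply

lemma inner_grad' (f : Euc d → ℝ) (x w : Euc d) : ⟪w, gradient f x⟫ = fderiv ℝ f x w := by
  rw [real_inner_comm]; exact inner_grad f x w

lemma line_hasDerivAt (p e : Euc d) (t : ℝ) :
    HasDerivAt (fun s : ℝ => p + s • e) e t := by
  simpa using ((hasDerivAt_id t).smul_const e).const_add p

lemma comp_line {f : Euc d → ℝ} {p e : Euc d} {t : ℝ}
    (hf : DifferentiableAt ℝ f (p + t • e)) :
    HasDerivAt (fun s => f (p + s • e)) (fderiv ℝ f (p + t • e) e) t := by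
  have := hf.hasFDerivAt.comp_hasDerivAt t (line_hasDerivAt p e t)
  exact this

lemma diff_fderiv_apply {f : Euc d → ℝ} {x : Euc d} (hf : ContDiffAt ℝ 2 f x) (e : Euc d) :
    DifferentiableAt ℝ (fun z => fderiv ℝ f z e) x := by
  have h1 : ContDiffAt ℝ 1 (fderiv ℝ f) x := hf.fderiv_right (by norm_num)
  exact (h1.differentiableAt (by norm_num)).clm_apply (differentiableAt_const e)

lemma nbhd_diff {f : Euc d → ℝ} {p : Euc d} (hf : ContDiffAt ℝ 2 f p) :
    ∃ U, IsOpen U ∧ p ∈ U ∧ ∀ y ∈ U, DifferentiableAt ℝ f y := by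
  have h1 : ContDiffAt ℝ 1 f p := hf.of_le (by norm_num)
  obtain ⟨U, hUo, hpU, hcd⟩ := h1.contDiffOn' le_rfl (by simp)
  refine ⟨U, hUo, hpU, fun y hy => ?_⟩
  have h2 : ContDiffOn ℝ 1 f U := by simpa using hcd
  exact ((h2.differentiableOn (by norm_num)) y hy).differentiableAt (hUo.mem_nhds hy)

/-- Second derivative test along a direction at a local min. -/
lemma localmin_second_deriv {f : Euc d → ℝ} {p : Euc d} (hf : ContDiffAt ℝ 2 f p)
    (hmin : IsLocalMin f p) (e : Euc d) :
    0 ≤ fderiv ℝ (fun z => fderiv ℝ f z e) p e := by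
  by_contra hA
  push_neg at hA
  set A := fderiv ℝ (fun z => fderiv ℝ f z e) p e with hAdef
  set g1 : ℝ → ℝ := fun s => fderiv ℝ f (p + s • e) e with hg1
  have hg1d : HasDerivAt g1 A 0 := by
    have hdd : DifferentiableAt ℝ (fun z => fderiv ℝ f z e) (p + (0:ℝ) • e) := by
      simpa using diff_fderiv_apply hf e
    have := comp_line (f := fun z => fderiv ℝ f z e) (p := p) (e := e) (t := 0) hdd
    simpa using this
  have hg10 : g1 0 = 0 := by
    have := hmin.fderiv_eq_zero
    simp [hg1, this]
  obtain ⟨U, hUo, hpU, hfd⟩ := nbhd_diff hf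
  obtain ⟨δ₁, hδ₁, hball⟩ := Metric.mem_nhds_iff.1 (hUo.mem_nhds hpU)
  obtain ⟨δ₂, hδ₂, hminb⟩ := Metric.mem_nhds_iff.1 hmin
  -- eventually g1 s < 0 for small s > 0
  have hq : Tendsto (fun s : ℝ => (g1 s - g1 0) / s) (𝓝[>] 0) (𝓝 A) := by
    have h1 := hg1d.hasDerivWithinAt (s := Ioi (0:ℝ))
    have h2 := hasDerivWithinAt_iff_tendsto_slope.mp h1
    have h3 : Tendsto (slope g1 0) (𝓝[>] 0) (𝓝 A) :=
      h2.mono_left (nhdsWithin_mono _ (fun x hx => ⟨hx, ne_of_gt hx⟩))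
    refine h3.congr' ?_
    filter_upwards [self_mem_nhdsWithin] with s hs
    simp [slope, div_eq_inv_mul]
  have hev : ∀ᶠ s in 𝓝[>] (0:ℝ), g1 s < 0 := by
    have hlt : ∀ᶠ s in 𝓝[>] (0:ℝ), (g1 s - g1 0) / s < A / 2 := by
      have hm : Iio (A/2) ∈ 𝓝 A := Iio_mem_nhds (by linarith)
      exact hq.eventually (eventually_of_mem hm (fun x hx => hx))
    filter_upwards [hlt, self_mem_nhdsWithin] with s hs hs'
    rw [hg10, sub_zero] at hs
    have hspos : (0:ℝ) < s := hs'
    by_contra hge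
    push_neg at hge
    have := div_nonneg hge hspos.le
    linarith
  obtain ⟨δ₃, hδ₃, hneg⟩ := mem_nhdsGT_iff_exists_Ioc_subset.mp hev
  have hδ₃' : (0:ℝ) < δ₃ := hδ₃
  set ε : ℝ := min (min δ₁ δ₂ / (2 * (‖e‖ + 1))) δ₃ with hε
  have hεpos : 0 < ε := by
    apply lt_min
    · have : 0 < min δ₁ δ₂ := lt_min hδ₁ hδ₂
      positivity
    · exact hδ₃'
  have hs_in : ∀ σ : ℝ, 0 ≤ σ → σ ≤ ε → p + σ • e ∈ ball p δ₁ ∩ ball p δ₂ := by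
    intro σ h0 h1
    have hn1 : ‖σ • e‖ ≤ ε * ‖e‖ := by
      rw [norm_smul, Real.norm_eq_abs, abs_of_nonneg h0]
      exact mul_le_mul_of_nonneg_right h1 (norm_nonneg e)
    have hεe : ε * ‖e‖ < min δ₁ δ₂ := by
      have h2 : ε ≤ min δ₁ δ₂ / (2 * (‖e‖ + 1)) := min_le_left _ _
      have h3 : 0 < min δ₁ δ₂ := lt_min hδ₁ hδ₂
      have h4 : (0:ℝ) < 2 * (‖e‖ + 1) := by positivity
      calc ε * ‖e‖ ≤ min δ₁ δ₂ / (2 * (‖e‖ + 1)) * ‖e‖ :=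
            mul_le_mul_of_nonneg_right h2 (norm_nonneg e)
        _ < min δ₁ δ₂ := by
            rw [div_mul_eq_mul_div, div_lt_iff₀ h4]
            nlinarith [norm_nonneg e]
    have hd : ‖p + σ • e - p‖ < min δ₁ δ₂ := by
      rw [add_sub_cancel_left]; exact lt_of_le_of_lt hn1 hεe
    constructor <;>
    · simp only [mem_ball, dist_eq_norm]
      exact lt_of_lt_of_le hd (by simp [min_le_left, min_le_right])
  -- MVT on [0, ε]
  set g : ℝ → ℝ := fun s => f (p + s • e) with hg
  have hder : ∀ σ ∈ Icc (0:ℝ) ε, HasDerivAt g (g1 σ) σ := by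
    intro σ hσ
    exact comp_line (hfd _ (hball (hs_in σ hσ.1 hσ.2).1))
  have hcont : ContinuousOn g (Icc 0 ε) := fun σ hσ => ((hder σ hσ).continuousAt).continuousWithinAt
  obtain ⟨c, hc, hceq⟩ := exists_hasDerivAt_eq_slope g g1 hεpos hcont
    (fun σ hσ => hder σ ⟨hσ.1.le, hσ.2.le⟩)
  have hcneg : g1 c < 0 := hneg ⟨hc.1, hc.2.le.trans (min_le_right _ _)⟩
  have hge : g ε ≥ g 0 := by
    have := hminb (hs_in ε hεpos.le le_rfl).2
    simpa [hg] using this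
  rw [hceq] at hcneg
  have h0' : g 0 = f p := by simp [hg]
  have : (g ε - g 0) / (ε - 0) ≥ 0 := by
    apply div_nonneg (by linarith) (by linarith)
  linarith

lemma fderiv_comb_apply {u w : Euc d → ℝ} {x : Euc d} (hu : DifferentiableAt ℝ u x)
    (hw : DifferentiableAt ℝ w x) (a b : ℝ) (e : Euc d) :
    fderiv ℝ (fun y => a * u y + b * w y) x e = a * fderiv ℝ u x e + b * fderiv ℝ w x e := by
  rw [fderiv_fun_add ((hu.const_mul a) : DifferentiableAt ℝ (fun y => a * u y) x)
    ((hw.const_mul b) : DifferentiableAt ℝ (fun y => b * w y) x)]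
  simp [fderiv_const_mul hu a, fderiv_const_mul hw b]

lemma lap_comb {u w : Euc d → ℝ} {x : Euc d} (hu : ContDiffAt ℝ 2 u x)
    (hw : ContDiffAt ℝ 2 w x) (a b : ℝ) :
    lap (fun y => a * u y + b * w y) x = a * lap u x + b * lap w x := by
  unfold lap
  rw [Finset.mul_sum, Finset.mul_sum, ← Finset.sum_add_distrib]
  apply Finset.sum_congr rfl
  intro i _
  set e := EuclideanSpace.single i (1:ℝ)
  obtain ⟨U, hUo, hxU, hud⟩ := nbhd_diff hu
  obtain ⟨V, hVo, hxV, hwd⟩ := nbhd_diff hw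
  have hev : (fun y => fderiv ℝ (fun z => a * u z + b * w z) y e)
      =ᶠ[𝓝 x] (fun y => a * fderiv ℝ u y e + b * fderiv ℝ w y e) := by
    filter_upwards [hUo.mem_nhds hxU, hVo.mem_nhds hxV] with y hyU hyV
    exact fderiv_comb_apply (hud y hyU) (hwd y hyV) a b e
  rw [hev.fderiv_eq]
  exact fderiv_comb_apply (diff_fderiv_apply hu e) (diff_fderiv_apply hw e) a b e

-- barrier function
def bar (α : ℝ) (y : Euc d) (x : Euc d) : ℝ := Real.exp (-α * ⟪x - y, x - y⟫)

lemma bar_pos (α : ℝ) (y x : Euc d) : 0 < bar α y x := Real.exp_pos _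

lemma bar_contDiff (α : ℝ) (y : Euc d) : ContDiff ℝ 2 (bar α y) := by
  apply ContDiff.exp
  exact contDiff_const.mul (ContDiff.inner ℝ (contDiff_id.sub contDiff_const)
    (contDiff_id.sub contDiff_const))

lemma inner_sub_const_hasFDerivAt (y e x : Euc d) :
    HasFDerivAt (fun z : Euc d => ⟪z - y, e⟫) (innerSL ℝ e) x := by
  have h1 : HasFDerivAt (fun z : Euc d => z - y) (ContinuousLinearMap.id ℝ (Euc d)) x :=
    (hasFDerivAt_id x).sub_const y
  have h2 := ((innerSL ℝ e).hasFDerivAt (x := x - y)).comp x h1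
  have heq : (fun z : Euc d => ⟪z - y, e⟫) = fun z => (innerSL ℝ e) (z - y) := by
    funext z; exact real_inner_comm _ _
  rw [heq]
  simpa [Function.comp_def] using h2
lemma bar_hasFDerivAt (α : ℝ) (y x : Euc d) :
    HasFDerivAt (bar α y) ((bar α y x * (-2*α)) • (innerSL ℝ (x - y))) x := by
  have hq : HasFDerivAt (fun z : Euc d => ⟪z - y, z - y⟫)
      ((2:ℝ) • (innerSL ℝ (x - y))) x := by
    have h1 : HasFDerivAt (fun z : Euc d => z - y) (ContinuousLinearMap.id ℝ (Euc d)) x :=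
      (hasFDerivAt_id x).sub_const y
    have h2 := HasFDerivAt.inner ℝ h1 h1
    refine h2.congr_fderiv ?_
    apply ContinuousLinearMap.ext
    intro w
    simp only [ContinuousLinearMap.comp_apply, ContinuousLinearMap.prod_apply,
      ContinuousLinearMap.coe_id', id_eq, fderivInnerCLM_apply, ContinuousLinearMap.smul_apply,
      innerSL_apply_apply, smul_eq_mul]
    rw [real_inner_comm]
    ring
  have h3 : HasFDerivAt (fun z : Euc d => -α * ⟪z - y, z - y⟫)
      ((-α * 2) • (innerSL ℝ (x - y))) x := by
    have := hq.const_mul (-α)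
    rwa [smul_smul] at this
  have h4 := h3.exp
  refine h4.congr_fderiv ?_
  rw [smul_smul]
  congr 1
  rw [bar]
  ring
lemma bar_fderiv_apply (α : ℝ) (y x w : Euc d) :
    fderiv ℝ (bar α y) x w = bar α y x * (-2*α) * ⟪x - y, w⟫ := by
  rw [(bar_hasFDerivAt α y x).fderiv]
  simp only [ContinuousLinearMap.smul_apply, innerSL_apply_apply, smul_eq_mul]
lemma bar_second (α : ℝ) (y x e : Euc d) :
    fderiv ℝ (fun z => fderiv ℝ (bar α y) z e) x e
      = bar α y x * (4*α^2*⟪x - y, e⟫^2 - 2*α*⟪e, e⟫) := by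
  have heq : (fun z => fderiv ℝ (bar α y) z e)
      = fun z => (-2*α) * (bar α y z * ⟪z - y, e⟫) := by
    funext z; rw [bar_fderiv_apply]; ring
  rw [heq]
  have hmul := (bar_hasFDerivAt α y x).mul' (inner_sub_const_hasFDerivAt y e x)
  have h5 := hmul.const_mul (-2*α)
  rw [HasFDerivAt.fderiv (f := fun z => (-2*α)*(bar α y z * ⟪z - y, e⟫)) h5]
  simp only [ContinuousLinearMap.smul_apply, ContinuousLinearMap.add_apply,
    ContinuousLinearMap.smulRight_apply, innerSL_apply_apply, op_smul_eq_smul, smul_eq_mul]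
  ring
lemma euc_sum_sq (w : Euc d) : ∑ i, (w i)^2 = ‖w‖^2 := by
  rw [EuclideanSpace.norm_eq, Real.sq_sqrt]
  · simp [Real.norm_eq_abs, sq_abs]
  · positivity
lemma bar_lap (α : ℝ) (y x : Euc d) :
    lap (bar α y) x = bar α y x * (4*α^2*‖x - y‖^2 - 2*α*d) := by
  unfold lap
  have h1 : ∀ i : Fin d,
      fderiv ℝ (fun z => fderiv ℝ (bar α y) z (EuclideanSpace.single i 1)) x
        (EuclideanSpace.single i 1)
      = bar α y x * (4*α^2*((x - y) i)^2 - 2*α) := by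
    intro i
    rw [bar_second]
    congr 2
    · congr 1
      simp [EuclideanSpace.inner_single_left, EuclideanSpace.inner_single_right]
    · simp
  rw [Finset.sum_congr rfl (fun i _ => h1 i)]
  have h2 : ∑ i : Fin d, (4*α^2*((x - y) i)^2 - 2*α) = 4*α^2*‖x - y‖^2 - 2*α*d := by
    rw [Finset.sum_sub_distrib, ← Finset.mul_sum, euc_sum_sq]
    simp [mul_comm, Finset.card_univ]
  rw [← Finset.mul_sum, h2]

section
lemma lap_const (c : ℝ) (x : Euc d) : lap (fun _ : Euc d => c) x = 0 := by
  unfold lap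
  have h1 : ∀ e : Euc d, (fun z : Euc d => fderiv ℝ (fun _ : Euc d => c) z e) = fun _ => 0 := by
    intro e; funext z; simp
  refine Finset.sum_eq_zero fun i _ => ?_
  rw [h1]; simp

lemma lap_sub_const {g : Euc d → ℝ} (hg : ContDiffAt ℝ 2 g x) (K : ℝ) :
    lap (fun z => g z - K) x = lap g x := by
  have h := lap_comb (u := g) (w := fun _ => (1:ℝ)) hg contDiffAt_const 1 (-K)
  have he : (fun z => g z - K) = (fun z => 1 * g z + (-K) * (fun _ : Euc d => (1:ℝ)) z) := by
    funext z; simp; ring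
  rw [he, h, lap_const]; ring


lemma exp_barrier_lower (α R t : ℝ) (hα : 0 < α) (hR : 0 < R) (ht0 : 0 ≤ t) (ht : t ≤ R/2) :
    α*R*Real.exp (-α*R^2) * t ≤ Real.exp (-α*(R-t)^2) - Real.exp (-α*R^2) := by
  set ω : ℝ → ℝ :=
    fun s => Real.exp (-α*(R-s)^2) - Real.exp (-α*R^2) - α*R*Real.exp (-α*R^2)*s with hωdef
  have hω : ∀ s : ℝ, HasDerivAt ω (2*α*(R-s)*Real.exp (-α*(R-s)^2) - α*R*Real.exp (-α*R^2)) s := by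
    intro s
    have h1 : HasDerivAt (fun s : ℝ => R - s) (-1) s := (hasDerivAt_id s).const_sub R
    have h2 : HasDerivAt (fun s : ℝ => (R - s)^2) (2*(R-s)*(-1)) s := by
      have := h1.pow 2
      simpa [Pi.pow_def] using this
    have h3 : HasDerivAt (fun s : ℝ => -α*(R-s)^2) (-α*(2*(R-s)*(-1))) s := h2.const_mul (-α)
    have h4 := h3.exp
    have h5 := (h4.sub_const (Real.exp (-α*R^2))).sub
      ((hasDerivAt_id s).const_mul (α*R*Real.exp (-α*R^2)))
    have h6 : HasDerivAt ω (Real.exp (-α*(R-s)^2) * (-α*(2*(R-s)*(-1))) - α*R*Real.exp (-α*R^2) * 1) s := by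
      simpa [hωdef, mul_comm, Pi.sub_def] using h5
    convert h6 using 1
    ring
  have hmono : MonotoneOn ω (Icc 0 (R/2)) := by
    apply monotoneOn_of_deriv_nonneg (convex_Icc _ _)
    · exact fun s _ => (hω s).continuousAt.continuousWithinAt
    · intro s _; exact (hω s).differentiableAt.differentiableWithinAt
    · intro s hs
      rw [(hω s).deriv]
      rw [interior_Icc] at hs
      have hs1 : 0 < s := hs.1
      have hs2 : s < R/2 := hs.2
      have hRs : R/2 ≤ R - s := by linarith
      have hRs2 : (R-s)^2 ≤ R^2 := by nlinarith
      have he : Real.exp (-α*R^2) ≤ Real.exp (-α*(R-s)^2) := by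
        apply Real.exp_le_exp.mpr; nlinarith
      have hfin : α*R*Real.exp (-α*R^2) ≤ 2*α*(R-s)*Real.exp (-α*(R-s)^2) := by
        have h0 : α*R ≤ 2*α*(R-s) := by nlinarith
        have := mul_le_mul h0 he (Real.exp_pos _).le (by nlinarith)
        linarith
      linarith
  have h0 : ω 0 = 0 := by simp [hωdef]
  have hfin := hmono (left_mem_Icc.mpr (by linarith)) (show t ∈ Icc 0 (R/2) from ⟨ht0, ht⟩) ht0
  rw [h0] at hfin
  simp only [hωdef] at hfin
  linarith

set_option maxHeartbeats 1000000 in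
/-- The Hopf-type barrier lemma on an annulus. -/
lemma hopf_barrier (hd : 1 ≤ d) (Ωb : Set (Euc d)) (v : Euc d → Euc d) (C : ℝ)
    (hC : 0 ≤ C) (hv : ∀ x ∈ Ωb, ‖v x‖ ≤ C) (lam : ℝ) (u : Euc d → ℝ)
    (y νv : Euc d) (R : ℝ) (hR : 0 < R) (hν : ‖νv‖ = 1)
    (hball : ball y R ⊆ Ωb)
    (hucont : ContinuousOn u (closedBall y R))
    (hureg : ∀ x ∈ Ωb, ContDiffAt ℝ 2 u x)
    (hPDE : ∀ x ∈ Ωb, lam * u x ≤ -lap u x + fderiv ℝ u x (v x))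
    (hu0 : ∀ x ∈ closedBall y R, 0 ≤ u x)
    (hupos : ∀ x ∈ ball y R, 0 < u x) :
    ∃ c > 0, ∀ t ∈ Ioo (0:ℝ) (R/2), c * t ≤ u (y + (R - t) • νv) := by
  haveI : Nonempty (Fin d) := ⟨⟨0, hd⟩⟩
  haveI : Nontrivial (Euc d) := by
    refine ⟨0, EuclideanSpace.single ⟨0, hd⟩ (1:ℝ), fun h => ?_⟩
    have := congrArg (fun w : Euc d => w ⟨0, hd⟩) h
    simp at this
  set lm : ℝ := max (-lam) 0 with hlm
  have hlm0 : 0 ≤ lm := le_max_right _ _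
  have hlamlm : 0 ≤ lam + lm := by
    rcases le_total 0 lam with h | h
    · linarith
    · have : lm = -lam := by rw [hlm, max_eq_left (by linarith)]
      linarith
  set α : ℝ := (2*d + 2*C*R + lm + 1)/R^2 + 1 with hα
  have hNpos : (0:ℝ) ≤ 2*d + 2*C*R + lm + 1 := by positivity
  have hα1 : 1 ≤ α := by
    rw [hα]
    have : 0 ≤ (2*d + 2*C*R + lm + 1)/R^2 := by positivity
    linarith
  have hα0 : 0 < α := by linarith
  have hαR : 2*d + 2*C*R + lm + 1 ≤ α * R^2 := by
    rw [hα, add_mul, div_mul_cancel₀ _ (by positivity : R^2 ≠ 0)]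
    nlinarith
  set K : ℝ := Real.exp (-α * R^2) with hK
  have hKpos : 0 < K := Real.exp_pos _
  -- Step L : differential inequality for the barrier in the annulus
  have stepL : ∀ p ∈ Ωb, R/2 ≤ dist p y → dist p y ≤ R →
      -lap (bar α y) p + fderiv ℝ (bar α y) p (v p) + lm * (bar α y p - K) < 0 := by
    intro p hp h1 h2
    have hr : dist p y = ‖p - y‖ := dist_eq_norm p y
    set r : ℝ := ‖p - y‖ with hrdef
    have hr1 : R/2 ≤ r := by rw [← hr]; exact h1
    have hr2 : r ≤ R := by rw [← hr]; exact h2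
    have hB := bar_pos α y p
    rw [bar_lap]
    have hfd : fderiv ℝ (bar α y) p (v p) ≤ bar α y p * (2*α) * (C * R) := by
      rw [bar_fderiv_apply]
      have hip : -(C * R) ≤ ⟪p - y, v p⟫ := by
        have habs := abs_real_inner_le_norm (p - y) (v p)
        have hv' := hv p hp
        have h3 : |⟪p - y, v p⟫| ≤ C * r := by
          refine le_trans habs ?_
          rw [mul_comm]
          exact mul_le_mul hv' le_rfl (norm_nonneg _) hC
        have h4 : C * r ≤ C * R := by nlinarith
        have h5 := (abs_le.mp (le_trans h3 h4)).1
        linarith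
      have h7 : (-2*α)*⟪p - y, v p⟫ ≤ 2*α*(C*R) := by
        nlinarith [mul_le_mul_of_nonneg_left hip (by positivity : (0:ℝ) ≤ 2*α)]
      calc bar α y p * (-2*α) * ⟪p - y, v p⟫ = bar α y p * ((-2*α)*⟪p - y, v p⟫) := by ring
        _ ≤ bar α y p * (2*α*(C*R)) := mul_le_mul_of_nonneg_left h7 hB.le
        _ = bar α y p * (2*α) * (C*R) := by ring
    have hKb : lm * (bar α y p - K) ≤ lm * bar α y p := by nlinarith
    have hlap : bar α y p * (α^2*R^2 - 2*α*d) ≤ bar α y p * (4*α^2*r^2 - 2*α*d) := by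
      have hR2 : R^2 ≤ 4*r^2 := by nlinarith
      have h5 : α^2 * R^2 ≤ 4*α^2*r^2 := by nlinarith [mul_le_mul_of_nonneg_left hR2 (sq_nonneg α)]
      exact mul_le_mul_of_nonneg_left (by linarith) hB.le
    have h5' : 2*α*d + 2*α*(C*R) + α*lm + α ≤ α^2*R^2 := by
      nlinarith [mul_le_mul_of_nonneg_left hαR hα0.le]
    have h6 : lm ≤ α * lm := by nlinarith
    have hgap : 0 < α^2*R^2 - (2*α*d + 2*α*(C*R) + lm) := by nlinarith
    have hmain : bar α y p * (2*α*(C*R)) + lm * bar α y p < bar α y p * (α^2*R^2 - 2*α*d) := by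
      nlinarith [mul_pos hB hgap]
    have hnr : ‖p - y‖ = r := hrdef.symm
    rw [hnr]
    nlinarith
  -- minimum of u on the inner sphere
  have hsne : (sphere y (R/2)).Nonempty := NormedSpace.sphere_nonempty.mpr (by positivity)
  have hsub : sphere y (R/2) ⊆ closedBall y R := by
    intro x hx
    simp only [mem_sphere] at hx
    simp only [mem_closedBall, hx]
    linarith
  obtain ⟨x₁, hx₁, hx₁min⟩ := (isCompact_sphere y (R/2)).exists_isMinOn hsne (hucont.mono hsub)
  set m₁ : ℝ := u x₁ with hm₁
  have hm₁pos : 0 < m₁ := hupos x₁ (by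
    have := mem_sphere.mp hx₁
    simp [mem_ball, this]; linarith)
  set ε : ℝ := m₁ * Real.exp (α * (R/2)^2) with hε
  have hεpos : 0 < ε := by positivity
  -- ε h ≤ u on the inner sphere
  have hinner : ∀ x ∈ sphere y (R/2), ε * (bar α y x - K) ≤ u x := by
    intro x hx
    have hxd : ‖x - y‖ = R/2 := by rw [← dist_eq_norm]; exact mem_sphere.mp hx
    have hbar : bar α y x = Real.exp (-α * (R/2)^2) := by
      rw [bar, real_inner_self_eq_norm_sq, hxd]
    have h1 : ε * (bar α y x - K) ≤ ε * bar α y x := by nlinarith [hεpos, hKpos]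
    have h2 : ε * bar α y x = m₁ := by
      rw [hbar, hε, mul_assoc, ← Real.exp_add]
      simp
    have h3 := hx₁min hx
    calc ε * (bar α y x - K) ≤ ε * bar α y x := h1
      _ = m₁ := h2
      _ ≤ u x := h3
  -- comparison on the annulus
  set S : Set (Euc d) := closedBall y R \ ball y (R/2) with hS
  have hScpt : IsCompact S := (isCompact_closedBall y R).diff isOpen_ball
  have hSsub : S ⊆ closedBall y R := diff_subset
  have hSne : S.Nonempty := by
    refine ⟨x₁, hsub hx₁, ?_⟩
    have := mem_sphere.mp hx₁
    simp [mem_ball, this]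
  set F : Euc d → ℝ := fun x => u x - ε * (bar α y x - K) with hF
  have hFcont : ContinuousOn F S := by
    apply ContinuousOn.sub (hucont.mono hSsub)
    exact (continuous_const.mul
      (((bar_contDiff α y).continuous).sub continuous_const)).continuousOn
  obtain ⟨p, hpS, hpmin⟩ := hScpt.exists_isMinOn hSne hFcont
  have hcomp : ∀ x ∈ S, 0 ≤ F x := by
    intro x hx
    by_contra hneg
    push_neg at hneg
    have hFp : F p < 0 := lt_of_le_of_lt (hpmin hx) hneg
    have hp1 : dist p y ≤ R := mem_closedBall.mp (hSsub hpS)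
    have hp2 : R/2 ≤ dist p y := by
      have := hpS.2
      simp only [mem_ball, not_lt] at this
      exact this
    have hpRlt : dist p y < R := by
      rcases lt_or_eq_of_le hp1 with h | h
      · exact h
      · exfalso
        have hxd : ‖p - y‖ = R := by rw [← dist_eq_norm]; exact h
        have hbK : bar α y p = K := by rw [bar, real_inner_self_eq_norm_sq, hxd]
        have hFu : F p = u p := by simp only [hF, hbK]; ring
        rw [hFu] at hFp
        exact absurd (hu0 p (hSsub hpS)) (not_le.mpr hFp)
    have hpRgt : R/2 < dist p y := by
      rcases lt_or_eq_of_le hp2 with h | h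
      · exact h
      · exfalso
        have hsp : p ∈ sphere y (R/2) := by rw [mem_sphere]; exact h.symm
        have := hinner p hsp
        simp only [hF] at hFp
        linarith
    have hpΩ : p ∈ Ωb := hball (mem_ball.mpr hpRlt)
    have hOopen : IsOpen (ball y R \ closedBall y (R/2)) := isOpen_ball.sdiff Metric.isClosed_closedBall
    have hpO : p ∈ ball y R \ closedBall y (R/2) := by
      refine ⟨mem_ball.mpr hpRlt, ?_⟩
      simp only [mem_closedBall, not_le]
      exact hpRgt
    have hOS : (ball y R \ closedBall y (R/2)) ⊆ S := fun x hx =>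
      ⟨ball_subset_closedBall hx.1, fun hc => hx.2 (ball_subset_closedBall hc)⟩
    have hlocmin : IsLocalMin F p :=
      (hpmin.on_subset hOS).isLocalMin (hOopen.mem_nhds hpO)
    have hbarC2 : ContDiffAt ℝ 2 (fun x => bar α y x - K) p :=
      ((bar_contDiff α y).contDiffAt).sub contDiffAt_const
    have huC2 : ContDiffAt ℝ 2 u p := hureg p hpΩ
    have hFC2 : ContDiffAt ℝ 2 F p := huC2.sub (contDiffAt_const.mul hbarC2)
    have hlapF : 0 ≤ lap F p := by
      unfold lap
      exact Finset.sum_nonneg fun i _ => localmin_second_deriv hFC2 hlocmin _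
    have hdF : fderiv ℝ F p = 0 := hlocmin.fderiv_eq_zero
    have hFeq : F = fun x => 1 * u x + (-ε) * (bar α y x - K) := by
      funext x; simp only [hF]; ring
    have hlapFc : lap F p = lap u p - ε * lap (bar α y) p := by
      rw [hFeq, lap_comb huC2 hbarC2 1 (-ε), lap_sub_const ((bar_contDiff α y).contDiffAt) K]
      ring
    have hdFc : fderiv ℝ u p (v p) = ε * fderiv ℝ (bar α y) p (v p) := by
      have h1 : fderiv ℝ F p (v p) =
          1 * fderiv ℝ u p (v p) + (-ε) * fderiv ℝ (fun x => bar α y x - K) p (v p) := by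
        rw [hFeq]
        exact fderiv_comb_apply (huC2.differentiableAt (by norm_num))
          (hbarC2.differentiableAt (by norm_num)) 1 (-ε) (v p)
      rw [hdF] at h1
      have h2 : fderiv ℝ (fun x => bar α y x - K) p = fderiv ℝ (bar α y) p :=
        fderiv_sub_const K
      rw [h2] at h1
      simp only [ContinuousLinearMap.zero_apply] at h1
      linarith
    have h8 := hPDE p hpΩ
    have h11 := stepL p hpΩ hp2 hp1
    have hup0 : 0 ≤ u p := hu0 p (hSsub hpS)
    have h15 : lam * u p < ε * (-(lm * (bar α y p - K))) := by
      have hc1 : lam * u p ≤ -(lap F p) + ε * (-lap (bar α y) p + fderiv ℝ (bar α y) p (v p)) := by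
        rw [hlapFc] at *
        nlinarith [h8, hdFc]
      have hc2 : ε * (-lap (bar α y) p + fderiv ℝ (bar α y) p (v p)) <
          ε * (-(lm * (bar α y p - K))) := by
        apply mul_lt_mul_of_pos_left _ hεpos
        linarith
      linarith
    have h16 : 0 ≤ lam * u p + lm * u p := by
      calc (0:ℝ) ≤ (lam + lm) * u p := mul_nonneg hlamlm hup0
        _ = lam * u p + lm * u p := by ring
    have h17 : lm * F p ≤ 0 := mul_nonpos_of_nonneg_of_nonpos hlm0 hFp.le
    have h18 : lm * F p = lm * u p - ε * (lm * (bar α y p - K)) := by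
      simp only [hF]; ring
    linarith
  -- conclusion
  refine ⟨ε * (α * R * Real.exp (-α * R^2)), by positivity, ?_⟩
  intro t ht
  obtain ⟨ht0, ht2⟩ := ht
  set xt : Euc d := y + (R - t) • νv with hxt
  have hRt : 0 < R - t := by linarith
  have hdist : dist xt y = R - t := by
    rw [hxt, dist_eq_norm]
    have : y + (R - t) • νv - y = (R - t) • νv := by abel
    rw [this, norm_smul, hν, Real.norm_eq_abs, abs_of_pos hRt, mul_one]
  have hxtS : xt ∈ S := by
    constructor
    · rw [mem_closedBall, hdist]; linarith
    · rw [mem_ball, not_lt, hdist]; linarith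
  have h19 := hcomp xt hxtS
  simp only [hF] at h19
  have hbar : bar α y xt = Real.exp (-α * (R-t)^2) := by
    rw [bar]
    have hsub2 : xt - y = (R - t) • νv := by rw [hxt]; abel
    rw [hsub2, real_inner_smul_left, real_inner_smul_right, real_inner_self_eq_norm_sq, hν]
    congr 1
    ring
  have hexp := exp_barrier_lower α R t hα0 hR ht0.le ht2.le
  calc ε * (α * R * Real.exp (-α * R^2)) * t
      = ε * (α * R * Real.exp (-α * R^2) * t) := by ring
    _ ≤ ε * (Real.exp (-α*(R-t)^2) - Real.exp (-α*R^2)) :=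
        mul_le_mul_of_nonneg_left hexp hεpos.le
    _ = ε * (bar α y xt - K) := by rw [hbar, hK]
    _ ≤ u xt := by linarith
end

lemma taylor_bound (Φ : Euc d → ℝ) (hΦ : ContDiff ℝ 2 Φ) (xb : Euc d) (ρ : ℝ) (hρ : 0 < ρ) :
    ∃ M : ℝ, 0 ≤ M ∧ ∀ z ∈ closedBall xb ρ,
      Φ z ≤ Φ xb + fderiv ℝ Φ xb (z - xb) + M * ‖z - xb‖^2 := by
  have hΦ1 : ContDiff ℝ 1 (fderiv ℝ Φ) := hΦ.fderiv_right le_rfl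
  have hcont : Continuous fun w => ‖fderiv ℝ (fderiv ℝ Φ) w‖ :=
    (hΦ1.continuous_fderiv (by norm_num)).norm
  obtain ⟨M₀, hM₀⟩ := (isCompact_closedBall xb ρ).exists_bound_of_continuousOn
    ((hΦ1.continuous_fderiv (by norm_num)).continuousOn)
  set M : ℝ := max M₀ 0 with hM
  refine ⟨M, le_max_right _ _, ?_⟩
  intro z hz
  set w : Euc d := z - xb with hw
  have hwρ : ‖w‖ ≤ ρ := by
    rw [hw, ← dist_eq_norm]; exact mem_closedBall.mp hz
  -- Lipschitz bound for the first derivative along the segment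
  have hlip : ∀ s ∈ Icc (0:ℝ) 1, ‖fderiv ℝ Φ (xb + s • w) - fderiv ℝ Φ xb‖ ≤ M * (s * ‖w‖) := by
    intro s hs
    have hmem : xb + s • w ∈ closedBall xb ρ := by
      rw [mem_closedBall, dist_eq_norm, add_sub_cancel_left, norm_smul, Real.norm_eq_abs,
        abs_of_nonneg hs.1]
      calc s * ‖w‖ ≤ 1 * ‖w‖ := mul_le_mul_of_nonneg_right hs.2 (norm_nonneg _)
        _ ≤ ρ := by rw [one_mul]; exact hwρ
    have := Convex.norm_image_sub_le_of_norm_fderiv_le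
      (f := fderiv ℝ Φ) (C := M) (s := closedBall xb ρ)
      (fun x _ => (hΦ1.differentiable (by norm_num)).differentiableAt)
      (fun x hx => le_trans (hM₀ x hx) (le_max_left _ _))
      (convex_closedBall xb ρ) (mem_closedBall_self hρ.le) hmem
    calc ‖fderiv ℝ Φ (xb + s • w) - fderiv ℝ Φ xb‖ ≤ M * ‖xb + s • w - xb‖ := this
      _ = M * (s * ‖w‖) := by
          rw [add_sub_cancel_left, norm_smul, Real.norm_eq_abs, abs_of_nonneg hs.1]
  -- 1D comparison
  set ω : ℝ → ℝ :=
    fun s => Φ xb + s * (fderiv ℝ Φ xb w) + M*‖w‖^2*s^2 - Φ (xb + s • w) with hω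
  have hωd : ∀ s : ℝ, HasDerivAt ω
      (fderiv ℝ Φ xb w + M*‖w‖^2*(2*s) - fderiv ℝ Φ (xb + s • w) w) s := by
    intro s
    have h1 : HasDerivAt (fun s : ℝ => Φ (xb + s • w)) (fderiv ℝ Φ (xb + s • w) w) s :=
      comp_line (hΦ.differentiable (by norm_num)).differentiableAt
    have h2 : HasDerivAt (fun s : ℝ => Φ xb + s * (fderiv ℝ Φ xb w) + M*‖w‖^2*s^2)
        (fderiv ℝ Φ xb w + M*‖w‖^2*(2*s)) s := by
      have h3 : HasDerivAt (fun s : ℝ => s * (fderiv ℝ Φ xb w)) (fderiv ℝ Φ xb w) s := by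
        simpa using (hasDerivAt_id s).mul_const (fderiv ℝ Φ xb w)
      have h4 : HasDerivAt (fun s : ℝ => M*‖w‖^2*s^2) (M*‖w‖^2*(2*s)) s := by
        have := ((hasDerivAt_pow 2 s).const_mul (M*‖w‖^2))
        simpa [mul_comm, mul_assoc] using this
      simpa [Pi.add_def] using (h3.const_add (Φ xb)).add h4
    simpa [hω, Pi.sub_def] using h2.sub h1
  have hmono : MonotoneOn ω (Icc 0 1) := by
    apply monotoneOn_of_deriv_nonneg (convex_Icc _ _)
    · exact fun s _ => (hωd s).continuousAt.continuousWithinAt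
    · exact fun s _ => (hωd s).differentiableAt.differentiableWithinAt
    · intro s hs
      rw [interior_Icc] at hs
      rw [(hωd s).deriv]
      have hbound := hlip s ⟨hs.1.le, hs.2.le⟩
      have happ : fderiv ℝ Φ (xb + s • w) w - fderiv ℝ Φ xb w ≤ M * (s * ‖w‖) * ‖w‖ := by
        have h5 : fderiv ℝ Φ (xb + s • w) w - fderiv ℝ Φ xb w
            = (fderiv ℝ Φ (xb + s • w) - fderiv ℝ Φ xb) w := by simp
        rw [h5]
        calc (fderiv ℝ Φ (xb + s • w) - fderiv ℝ Φ xb) w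
            ≤ ‖(fderiv ℝ Φ (xb + s • w) - fderiv ℝ Φ xb) w‖ := le_abs_self _
          _ ≤ ‖fderiv ℝ Φ (xb + s • w) - fderiv ℝ Φ xb‖ * ‖w‖ :=
              ContinuousLinearMap.le_opNorm _ _
          _ ≤ M * (s * ‖w‖) * ‖w‖ := mul_le_mul_of_nonneg_right hbound (norm_nonneg _)
      have hMw : 0 ≤ M := le_max_right _ _
      have hs0 : 0 ≤ s := hs.1.le
      have hs1 : s ≤ 1 := hs.2.le
      nlinarith [mul_nonneg (mul_nonneg hMw hs0) (sq_nonneg ‖w‖), happ]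
  have h0 : ω 0 = 0 := by simp [hω]
  have h1 : 0 ≤ ω 1 := by
    have := hmono (left_mem_Icc.mpr zero_le_one) (right_mem_Icc.mpr zero_le_one) zero_le_one
    rw [h0] at this; exact this
  have hz1 : xb + (1:ℝ) • w = z := by rw [one_smul, hw]; abel
  simp only [hω, hz1] at h1
  linarith

/-- Interior sphere condition from a C² chart at a boundary point. -/
lemma interior_ball (Ω : Set (Euc d)) (xb : Euc d) (hx : xb ∈ frontier Ω)
    (r : ℝ) (hr : 0 < r) (Φ : Euc d → ℝ) (hΦ : ContDiff ℝ 2 Φ)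
    (hgrad : ∀ y ∈ ball xb r, gradient Φ y ≠ 0)
    (hΩeq : Ω ∩ ball xb r = {y | y ∈ ball xb r ∧ Φ y < 0})
    (hfront : frontier Ω ∩ ball xb r = {y | y ∈ ball xb r ∧ Φ y = 0}) :
    ∃ R > 0, R < r ∧
      ball (xb - R • (‖gradient Φ xb‖⁻¹ • gradient Φ xb)) R ⊆ Ω := by
  set g : Euc d := gradient Φ xb with hgdef
  have hg : g ≠ 0 := hgrad xb (mem_ball_self hr)
  have hgn : 0 < ‖g‖ := norm_pos_iff.mpr hg
  set n : Euc d := ‖g‖⁻¹ • g with hn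
  have hn1 : ‖n‖ = 1 := by
    rw [hn, norm_smul, Real.norm_eq_abs, abs_of_pos (inv_pos.mpr hgn), inv_mul_cancel₀ hgn.ne']
  have hΦ0 : Φ xb = 0 := by
    have : xb ∈ frontier Ω ∩ ball xb r := ⟨hx, mem_ball_self hr⟩
    rw [hfront] at this
    exact this.2
  obtain ⟨M, hM0, hTay⟩ := taylor_bound Φ hΦ xb (r/2) (by linarith)
  set R : ℝ := min (r/4) (‖g‖/(2*(M+1))) with hR
  have hRpos : 0 < R := by
    apply lt_min (by linarith)
    positivity
  have hRr : R < r := lt_of_le_of_lt (min_le_left _ _) (by linarith)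
  have hR4 : R ≤ r/4 := min_le_left _ _
  have hRG : 2*R*(M+1) ≤ ‖g‖ := by
    have h1 : R ≤ ‖g‖/(2*(M+1)) := min_le_right _ _
    have h2 : (0:ℝ) < 2*(M+1) := by linarith
    calc 2*R*(M+1) = R * (2*(M+1)) := by ring
      _ ≤ ‖g‖/(2*(M+1)) * (2*(M+1)) := mul_le_mul_of_nonneg_right h1 h2.le
      _ = ‖g‖ := div_mul_cancel₀ _ h2.ne'
  refine ⟨R, hRpos, hRr, ?_⟩
  intro z hz
  set w : Euc d := z - xb with hw
  have hkey : ‖w‖^2 + 2*R*⟪w, n⟫ < 0 := by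
    have h1 : ‖z - (xb - R • n)‖ < R := by rw [← dist_eq_norm]; exact mem_ball.mp hz
    have h2 : z - (xb - R • n) = w + R • n := by rw [hw]; abel
    rw [h2] at h1
    have h3 : ‖w + R • n‖^2 < R^2 := by
      have := mul_self_lt_mul_self (norm_nonneg _) h1
      nlinarith
    rw [norm_add_sq_real, norm_smul, Real.norm_eq_abs, abs_of_pos hRpos, hn1,
      real_inner_smul_right] at h3
    nlinarith
  have hwpos : 0 < ‖w‖ := by
    have h1 : ‖z - (xb - R • n)‖ < R := by rw [← dist_eq_norm]; exact mem_ball.mp hz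
    have h2 : z - (xb - R • n) = w + R • n := by rw [hw]; abel
    rw [h2] at h1
    have h3 : ‖R • n‖ = R := by
      rw [norm_smul, Real.norm_eq_abs, abs_of_pos hRpos, hn1, mul_one]
    have h4 : ‖R • n‖ ≤ ‖w + R • n‖ + ‖w‖ := by
      calc ‖R • n‖ = ‖(w + R • n) - w‖ := by congr 1; abel
        _ ≤ ‖w + R • n‖ + ‖w‖ := norm_sub_le _ _
    rw [h3] at h4
    linarith
  have hw2R : ‖w‖ < 2*R := by
    have h1 : ‖z - (xb - R • n)‖ < R := by rw [← dist_eq_norm]; exact mem_ball.mp hz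
    have h2 : z - (xb - R • n) = w + R • n := by rw [hw]; abel
    rw [h2] at h1
    have h3 : ‖R • n‖ = R := by
      rw [norm_smul, Real.norm_eq_abs, abs_of_pos hRpos, hn1, mul_one]
    calc ‖w‖ = ‖(w + R • n) - R • n‖ := by congr 1; abel
      _ ≤ ‖w + R • n‖ + ‖R • n‖ := norm_sub_le _ _
      _ < R + R := by rw [h3]; linarith
      _ = 2*R := by ring
  have hzball : z ∈ closedBall xb (r/2) := by
    rw [mem_closedBall, dist_eq_norm, ← hw]
    have : 2*R ≤ r/2 := by linarith
    linarith
  have hTz := hTay z hzball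
  rw [hΦ0, ← hw] at hTz
  have hfg : fderiv ℝ Φ xb w = ‖g‖ * ⟪w, n⟫ := by
    rw [← inner_grad, ← hgdef]
    have : g = ‖g‖ • n := by
      rw [hn, smul_smul, mul_inv_cancel₀ hgn.ne', one_smul]
    calc ⟪g, w⟫ = ⟪‖g‖ • n, w⟫ := by rw [← this]
      _ = ‖g‖ * ⟪n, w⟫ := real_inner_smul_left _ _ _
      _ = ‖g‖ * ⟪w, n⟫ := by rw [real_inner_comm]
  have hΦz : Φ z < 0 := by
    rw [hfg] at hTz
    -- Φ z ≤ ‖g‖⟪w,n⟫ + M‖w‖², with ‖w‖² + 2R⟪w,n⟫ < 0 and 2R(M+1) ≤ ‖g‖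
    nlinarith [mul_lt_mul_of_pos_left hkey hgn, mul_le_mul_of_nonneg_right hRG (sq_nonneg ‖w‖),
      mul_pos hRpos (mul_pos hwpos hwpos), sq_nonneg ‖w‖, hwpos]
  have hzr : z ∈ ball xb r := by
    rw [mem_ball, dist_eq_norm, ← hw]
    linarith
  have : z ∈ Ω ∩ ball xb r := by
    rw [hΩeq]; exact ⟨hzr, hΦz⟩
  exact this.1

lemma slope_tendsto {g : ℝ → ℝ} {A : ℝ} (h : HasDerivAt g A 0) :
    Tendsto (fun s : ℝ => (g s - g 0) / s) (𝓝[>] 0) (𝓝 A) := by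
  have h1 := h.hasDerivWithinAt (s := Ioi (0:ℝ))
  have h2 := hasDerivWithinAt_iff_tendsto_slope.mp h1
  have h3 : Tendsto (slope g 0) (𝓝[>] 0) (𝓝 A) :=
    h2.mono_left (nhdsWithin_mono _ (fun x hx => ⟨hx, ne_of_gt hx⟩))
  refine h3.congr' ?_
  filter_upwards [self_mem_nhdsWithin] with s _
  simp [slope, div_eq_inv_mul]

lemma pt_line_eq (x nv : Euc d) (R s : ℝ) : (x - R • nv) + (R - s) • nv = x + s • (-nv) := by
  rw [sub_smul, smul_neg]; abel

set_option maxHeartbeats 2000000 in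
/-- The Robin principal eigenvalue is strictly below the Dirichlet principal
eigenvalue (Lemma 2.2). -/
theorem robin_lt_dirichlet
    (d : ℕ) (hd : 1 ≤ d) (Ω : Set (Euc d)) (ν : Euc d → Euc d)
    (hΩ : IsBoundedC2Domain Ω ν) (β : ℝ) (hβ : 0 < β)
    (v : Euc d → Euc d) (hmeas : Measurable v) (hbd : ∃ C : ℝ, ∀ x ∈ Ω, ‖v x‖ ≤ C)
    (lam : ℝ) (φ : Euc d → ℝ) (hrobin : IsRobinEigenpair Ω ν v β lam φ)
    (μ : ℝ) (ψ : Euc d → ℝ) (hdir : IsDirichletEigenpair Ω v μ ψ) :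
    lam < μ := by
  obtain ⟨hne, hΩo, hbdd, hconn, hchart⟩ := hΩ
  obtain ⟨hφc, hφreg, hφpos, hφpde, G, ⟨hGc, hGeq⟩, hRobin⟩ := hrobin
  obtain ⟨hψc, hψreg, hψpos, hψ0, hψpde⟩ := hdir
  obtain ⟨C₀, hC₀⟩ := hbd
  set C : ℝ := max C₀ 0 with hC
  have hC0 : 0 ≤ C := le_max_right _ _
  have hv : ∀ x ∈ Ω, ‖v x‖ ≤ C := fun x hx => le_trans (hC₀ x hx) (le_max_left _ _)
  by_contra hcon
  push_neg at hcon   -- hcon : μ ≤ lam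
  have hφreg' : ∀ x ∈ Ω, ContDiffAt ℝ 2 φ x := fun x hx =>
    hφreg.contDiffAt (hΩo.mem_nhds hx)
  have hψreg' : ∀ x ∈ Ω, ContDiffAt ℝ 2 ψ x := fun x hx =>
    hψreg.contDiffAt (hΩo.mem_nhds hx)
  have hφpdeF : ∀ p ∈ Ω, lam * φ p ≤ -lap φ p + fderiv ℝ φ p (v p) := by
    intro p hp
    have := hφpde p hp
    rw [inner_grad'] at this
    linarith
  have hψpdeF : ∀ p ∈ Ω, -lap ψ p + fderiv ℝ ψ p (v p) = μ * ψ p := by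
    intro p hp
    have := hψpde p hp
    rwa [inner_grad'] at this
  have hφpdeF' : ∀ p ∈ Ω, -lap φ p + fderiv ℝ φ p (v p) = lam * φ p := by
    intro p hp
    have := hφpde p hp
    rwa [inner_grad'] at this
  -- Step A : φ ≥ 0 on the closure
  have hφ0 : ∀ x ∈ closure Ω, 0 ≤ φ x := by
    intro x hx
    haveI hnb : (𝓝[Ω] x).NeBot := mem_closure_iff_nhdsWithin_neBot.mp hx
    have ht : Tendsto φ (𝓝[Ω] x) (𝓝 (φ x)) :=
      ((hφc x hx).mono_left (nhdsWithin_mono _ subset_closure))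
    refine ge_of_tendsto ht ?_
    filter_upwards [self_mem_nhdsWithin] with w hw
    exact (hφpos w hw).le
  -- Step B : φ > 0 on the closure (Hopf at the boundary)
  have hφpos' : ∀ x ∈ closure Ω, 0 < φ x := by
    intro x hx
    by_cases hxΩ : x ∈ Ω
    · exact hφpos x hxΩ
    have hxfr : x ∈ frontier Ω := by rw [hΩo.frontier_eq]; exact ⟨hx, hxΩ⟩
    rcases (hφ0 x hx).lt_or_eq with h | h
    · exact h
    exfalso
    have hφx0 : φ x = 0 := h.symm
    obtain ⟨r, hr, Φ, hΦ, hgrad, hΩeq, hfront, hnormal⟩ := hchart x hxfr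
    obtain ⟨R, hRpos, hRr, hballsub⟩ := interior_ball Ω x hxfr r hr Φ hΦ hgrad hΩeq hfront
    set nv : Euc d := ‖gradient Φ x‖⁻¹ • gradient Φ x with hnv
    have hgn : 0 < ‖gradient Φ x‖ := norm_pos_iff.mpr (hgrad x (mem_ball_self hr))
    have hn1 : ‖nv‖ = 1 := by
      rw [hnv, norm_smul, Real.norm_eq_abs, abs_of_pos (inv_pos.mpr hgn),
        inv_mul_cancel₀ hgn.ne']
    set y : Euc d := x - R • nv with hy
    have hclb : closedBall y R ⊆ closure Ω := by
      rw [← closure_ball y hRpos.ne']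
      exact closure_mono hballsub
    obtain ⟨c, hc, hineq⟩ := hopf_barrier hd Ω v C hC0 hv lam φ y nv R hRpos hn1 hballsub
      (hφc.mono hclb) hφreg' hφpdeF (fun w hw => hφ0 w (hclb hw))
      (fun w hw => hφpos w (hballsub hw))
    -- membership of the segment points
    have hseg : ∀ s : ℝ, s ∈ Ioo (0:ℝ) (R/2) → x + s • (-nv) ∈ Ω := by
      intro s hs
      apply hballsub
      rw [mem_ball, dist_eq_norm, ← pt_line_eq x nv R s]
      have heq : x - R • nv + (R - s) • nv - y = (R - s) • nv := by rw [hy]; abel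
      rw [heq, norm_smul, Real.norm_eq_abs, hn1, mul_one,
        abs_of_pos (by linarith [hs.1, hs.2, hRpos] : (0:ℝ) < R - s)]
      linarith [hs.1]
    -- Mean value theorem step
    have key : ∀ t ∈ Ioo (0:ℝ) (R/2), ∃ ξ ∈ Ioo (0:ℝ) t, ⟪G (x + ξ • (-nv)), nv⟫ ≤ -c := by
      intro t ht
      set g : ℝ → ℝ := fun s => φ (x + s • (-nv)) with hg
      have hgcont : ContinuousOn g (Icc 0 t) := by
        apply ContinuousOn.comp hφc
        · exact (continuous_const.add (continuous_id.smul continuous_const)).continuousOn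
        · intro s hs
          show x + s • (-nv) ∈ closure Ω
          rcases eq_or_lt_of_le hs.1 with h0 | h0
          · have heq0 : x + s • (-nv) = x := by rw [← h0]; simp
            rw [heq0]; exact hx
          · exact subset_closure (hseg s ⟨h0, lt_of_le_of_lt hs.2 ht.2⟩)
      have hgder : ∀ s ∈ Ioo (0:ℝ) t, HasDerivAt g (fderiv ℝ φ (x + s • (-nv)) (-nv)) s := by
        intro s hs
        exact comp_line ((hφreg' _ (hseg s ⟨hs.1, lt_trans hs.2 ht.2⟩)).differentiableAt
          (by norm_num))
      obtain ⟨ξ, hξ, heq⟩ := exists_hasDerivAt_eq_slope g _ ht.1 hgcont hgder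
      refine ⟨ξ, hξ, ?_⟩
      have hξΩ : x + ξ • (-nv) ∈ Ω := hseg ξ ⟨hξ.1, lt_trans hξ.2 ht.2⟩
      have hgt : c * t ≤ g t := by
        have h1 := hineq t ht
        have h2 : y + (R - t) • nv = x + t • (-nv) := by rw [hy]; exact pt_line_eq x nv R t
        rw [h2] at h1
        exact h1
      have hg0 : g 0 = 0 := by
        have : x + (0:ℝ) • (-nv) = x := by simp
        simp only [hg, this, hφx0]
      have hslope : c ≤ fderiv ℝ φ (x + ξ • (-nv)) (-nv) := by
        rw [heq, hg0, sub_zero, sub_zero, le_div_iff₀ ht.1]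
        linarith
      have hGval : ⟪G (x + ξ • (-nv)), nv⟫ = fderiv ℝ φ (x + ξ • (-nv)) nv := by
        rw [hGeq _ hξΩ, inner_grad]
      rw [hGval]
      have : fderiv ℝ φ (x + ξ • (-nv)) (-nv) = -(fderiv ℝ φ (x + ξ • (-nv)) nv) := by
        rw [map_neg]
      linarith [hslope, this]
    -- frequently and limit
    have hfreq : ∃ᶠ ξ in 𝓝[>] (0:ℝ), ⟪G (x + ξ • (-nv)), nv⟫ ≤ -c := by
      rw [frequently_iff]
      intro U hU
      obtain ⟨t', ht', hsubU⟩ := mem_nhdsGT_iff_exists_Ioc_subset.mp hU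
      have ht'0 : (0:ℝ) < t' := ht'
      set t : ℝ := min t' (R/2) / 2 with htdef
      have htpos : 0 < t := by positivity
      have htlt : t < R/2 := by
        have h1 : min t' (R/2) ≤ R/2 := min_le_right _ _
        rw [htdef]
        linarith
      obtain ⟨ξ, hξ, hP⟩ := key t ⟨htpos, htlt⟩
      refine ⟨ξ, hsubU ⟨hξ.1, ?_⟩, hP⟩
      have h2 : t ≤ t' / 2 := by
        have := min_le_left t' (R/2)
        rw [htdef]
        linarith [this]
      linarith [hξ.2]
    have hxcl : x ∈ closure Ω := hx
    have hpath : Tendsto (fun ξ : ℝ => x + ξ • (-nv)) (𝓝[>] 0) (𝓝[closure Ω] x) := by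
      rw [tendsto_nhdsWithin_iff]
      constructor
      · have hcont : Continuous (fun ξ : ℝ => x + ξ • (-nv)) :=
          continuous_const.add (continuous_id.smul continuous_const)
        have := hcont.tendsto 0
        simp only [zero_smul, add_zero] at this
        exact this.mono_left nhdsWithin_le_nhds
      · filter_upwards [Ioo_mem_nhdsGT_of_mem (by constructor <;> [exact le_refl (0:ℝ); linarith] : (0:ℝ) ∈ Ico 0 (R/2))] with ξ hξ
        exact subset_closure (hseg ξ hξ)
    have hGt : Tendsto (fun ξ : ℝ => ⟪G (x + ξ • (-nv)), nv⟫) (𝓝[>] 0) (𝓝 ⟪G x, nv⟫) := by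
      have h1 : Tendsto (fun ξ : ℝ => G (x + ξ • (-nv))) (𝓝[>] 0) (𝓝 (G x)) :=
        ((hGc x hxcl).tendsto).comp hpath
      exact (h1.inner tendsto_const_nhds)
    have hlim : ⟪G x, nv⟫ ≤ -c := by
      have hcl : IsClosed {r : ℝ | r ≤ -c} := isClosed_Iic
      exact hcl.mem_of_frequently_of_tendsto hfreq hGt
    have hR0 := hRobin x hxfr
    have hνx : ν x = nv := hnormal x ⟨hxfr, mem_ball_self hr⟩
    rw [hνx, hφx0, mul_zero, add_zero] at hR0
    linarith
  -- Step C : maximum of ψ/φ on the closure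
  have hclcpt : IsCompact (closure Ω) := hbdd.isCompact_closure
  have hclne : (closure Ω).Nonempty := hne.mono subset_closure
  have hqc : ContinuousOn (fun x => ψ x / φ x) (closure Ω) :=
    hψc.div hφc (fun x hx => (hφpos' x hx).ne')
  obtain ⟨x₀, hx₀cl, hx₀max⟩ := hclcpt.exists_isMaxOn hclne hqc
  set M : ℝ := ψ x₀ / φ x₀ with hM
  obtain ⟨z₀, hz₀⟩ := id hne
  have hMq : ∀ x ∈ closure Ω, ψ x / φ x ≤ M := fun x hx => hx₀max hx
  have hMpos : 0 < M := by
    have h1 : 0 < ψ z₀ / φ z₀ := div_pos (hψpos z₀ hz₀) (hφpos z₀ hz₀)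
    exact lt_of_lt_of_le h1 (hMq z₀ (subset_closure hz₀))
  have hzle : ∀ x ∈ closure Ω, ψ x ≤ M * φ x := by
    intro x hx
    have h1 := hMq x hx
    rw [div_le_iff₀ (hφpos' x hx)] at h1
    linarith [h1]
  have hx₀Ω : x₀ ∈ Ω := by
    by_contra hx₀f
    have hfr : x₀ ∈ frontier Ω := by rw [hΩo.frontier_eq]; exact ⟨hx₀cl, hx₀f⟩
    have : ψ x₀ = 0 := hψ0 x₀ hfr
    rw [hM, this] at hMpos
    simp at hMpos
  have hψx₀ : ψ x₀ = M * φ x₀ := by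
    rw [hM, div_mul_cancel₀ _ (hφpos x₀ hx₀Ω).ne']
  -- the comparison function z
  set z : Euc d → ℝ := fun x => M * φ x + (-1) * ψ x with hz
  have hz0' : ∀ x ∈ closure Ω, 0 ≤ z x := by
    intro x hx
    have := hzle x hx
    simp only [hz]
    linarith
  have hzx₀ : z x₀ = 0 := by simp only [hz]; linarith [hψx₀]
  have hzreg : ∀ p ∈ Ω, ContDiffAt ℝ 2 z p := fun p hp =>
    (contDiffAt_const.mul (hφreg' p hp)).add (contDiffAt_const.mul (hψreg' p hp))
  have hzPDE : ∀ p ∈ Ω, lam * z p ≤ -lap z p + fderiv ℝ z p (v p) := by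
    intro p hp
    have hlapz : lap z p = M * lap φ p + (-1) * lap ψ p :=
      lap_comb (hφreg' p hp) (hψreg' p hp) M (-1)
    have hfz : fderiv ℝ z p (v p) = M * fderiv ℝ φ p (v p) + (-1) * fderiv ℝ ψ p (v p) :=
      fderiv_comb_apply ((hφreg' p hp).differentiableAt (by norm_num))
        ((hψreg' p hp).differentiableAt (by norm_num)) M (-1) (v p)
    have h1 := hφpdeF' p hp
    have h2 := hψpdeF p hp
    have h3 : 0 ≤ (lam - μ) * ψ p := mul_nonneg (by linarith) (hψpos p hp).le
    have hzp : z p = M * φ p + (-1) * ψ p := rfl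
    rw [hlapz, hfz, hzp]
    nlinarith [h1, h2, h3]
  have hzcontAt : ∀ p ∈ Ω, ContinuousAt z p := fun p hp =>
    ((hzreg p hp).of_le (by norm_num : (0:WithTop ℕ∞) ≤ 2)).continuousAt
  -- zero set and positive set
  set Z : Set (Euc d) := {x | x ∈ Ω ∧ z x = 0} with hZ
  set P : Set (Euc d) := {x | x ∈ Ω ∧ 0 < z x} with hP
  have hzero_closure : ∀ q ∈ Ω, q ∈ closure Z → z q = 0 := by
    intro q hq hqcl
    haveI : (𝓝[Z] q).NeBot := mem_closure_iff_nhdsWithin_neBot.mp hqcl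
    have h1 : Tendsto z (𝓝[Z] q) (𝓝 (z q)) := (hzcontAt q hq).continuousWithinAt
    have h2 : Tendsto z (𝓝[Z] q) (𝓝 0) := by
      have he : ∀ᶠ w in 𝓝[Z] q, z w = 0 := by
        filter_upwards [self_mem_nhdsWithin] with w hw
        exact hw.2
      exact Tendsto.congr' (by filter_upwards [he] with w hw; exact hw.symm) tendsto_const_nhds
    exact tendsto_nhds_unique h1 h2
  have hPopen : IsOpen P := by
    rw [isOpen_iff_mem_nhds]
    intro p hp
    filter_upwards [hΩo.mem_nhds hp.1, (hzcontAt p hp.1) (Ioi_mem_nhds hp.2)] with w h1 h2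
    exact ⟨h1, h2⟩
  have hZopen : IsOpen Z := by
    rw [Metric.isOpen_iff]
    intro p hp
    obtain ⟨d₀, hd₀, hballΩ⟩ := Metric.isOpen_iff.mp hΩo p hp.1
    refine ⟨d₀/4, by linarith, ?_⟩
    intro q hq
    rw [mem_ball] at hq
    have hqΩ : q ∈ Ω := hballΩ (by rw [mem_ball]; linarith)
    refine ⟨hqΩ, ?_⟩
    by_contra hzq
    have hzqpos : 0 < z q := lt_of_le_of_ne (hz0' q (subset_closure hqΩ)) (Ne.symm hzq)
    have hZne : Z.Nonempty := ⟨p, hp⟩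
    have hqA : q ∉ closure Z := fun h => hzq (hzero_closure q hqΩ h)
    set s : ℝ := infDist q (closure Z) with hs
    have hspos : 0 < s :=
      (isClosed_closure.notMem_iff_infDist_pos (hZne.mono subset_closure)).mp hqA
    have hsle : s ≤ dist q p := infDist_le_dist_of_mem (subset_closure hp)
    have hballq : closedBall q s ⊆ Ω := by
      intro w hw
      apply hballΩ
      rw [mem_ball]
      have h1 : dist w q ≤ s := mem_closedBall.mp hw
      calc dist w p ≤ dist w q + dist q p := dist_triangle w q p
        _ < d₀ := by linarith
    have hzposball : ∀ w ∈ ball q s, 0 < z w := by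
      intro w hw
      have hwΩ : w ∈ Ω := hballq (ball_subset_closedBall hw)
      rcases (hz0' w (subset_closure hwΩ)).lt_or_eq with h | h
      · exact h
      · exfalso
        have hwZ : w ∈ closure Z := subset_closure ⟨hwΩ, h.symm⟩
        have := infDist_le_dist_of_mem (x := q) hwZ
        rw [← hs] at this
        rw [mem_ball] at hw
        rw [dist_comm] at hw
        linarith
    obtain ⟨xb2, hxb2A, hxb2d⟩ :=
      isClosed_closure.exists_infDist_eq_dist (hZne.mono subset_closure) q
    have hdqx : dist q xb2 = s := by rw [← hs] at hxb2d; exact hxb2d.symm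
    have hxb2Ω : xb2 ∈ Ω := by
      apply hballΩ
      rw [mem_ball]
      calc dist xb2 p ≤ dist xb2 q + dist q p := dist_triangle xb2 q p
        _ < d₀ := by rw [dist_comm xb2 q]; linarith [hdqx]
    have hzxb2 : z xb2 = 0 := hzero_closure xb2 hxb2Ω hxb2A
    set νd : Euc d := s⁻¹ • (xb2 - q) with hνd
    have hnq : ‖xb2 - q‖ = s := by
      rw [← dist_eq_norm, dist_comm]; exact hdqx
    have hνd1 : ‖νd‖ = 1 := by
      rw [hνd, norm_smul, Real.norm_eq_abs, abs_of_pos (inv_pos.mpr hspos), hnq,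
        inv_mul_cancel₀ hspos.ne']
    have hxb2eq : q + s • νd = xb2 := by
      rw [hνd, smul_smul, mul_inv_cancel₀ hspos.ne', one_smul]
      abel
    obtain ⟨c, hc, hineq⟩ := hopf_barrier hd Ω v C hC0 hv lam z q νd s hspos hνd1
      (fun w hw => hballq (ball_subset_closedBall hw))
      (fun w hw => (hzcontAt w (hballq hw)).continuousWithinAt)
      hzreg hzPDE (fun w hw => hz0' w (subset_closure (hballq hw))) hzposball
    -- xb2 is an interior minimum of z
    have hlocmin : IsLocalMin z xb2 := by
      have : ∀ᶠ w in 𝓝 xb2, z xb2 ≤ z w := by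
        filter_upwards [hΩo.mem_nhds hxb2Ω] with w hw
        rw [hzxb2]
        exact hz0' w (subset_closure hw)
      exact this
    have hdz : fderiv ℝ z xb2 = 0 := hlocmin.fderiv_eq_zero
    have hgd : HasDerivAt (fun t : ℝ => z (xb2 + t • (-νd))) 0 0 := by
      have h1 : DifferentiableAt ℝ z (xb2 + (0:ℝ) • (-νd)) := by
        simpa using (hzreg xb2 hxb2Ω).differentiableAt (by norm_num)
      have h2 := comp_line h1
      have h3 : fderiv ℝ z (xb2 + (0:ℝ) • (-νd)) (-νd) = 0 := by
        have : xb2 + (0:ℝ) • (-νd) = xb2 := by simp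
        rw [this, hdz]
        simp
      rwa [h3] at h2
    have hslope := slope_tendsto hgd
    have hev : ∀ᶠ t in 𝓝[>] (0:ℝ),
        c ≤ (z (xb2 + t • (-νd)) - z (xb2 + (0:ℝ) • (-νd))) / t := by
      filter_upwards [Ioo_mem_nhdsGT_of_mem
        (⟨le_refl (0:ℝ), by linarith⟩ : (0:ℝ) ∈ Ico 0 (s/2))] with t ht
      have h1 := hineq t ht
      have h2 : q + (s - t) • νd = xb2 + t • (-νd) := by
        rw [← hxb2eq]
        have := pt_line_eq (q + s • νd) νd s t
        rw [show q + s • νd - s • νd = q by abel] at this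
        exact this
      rw [h2] at h1
      have h3 : xb2 + (0:ℝ) • (-νd) = xb2 := by simp
      rw [h3, hzxb2, sub_zero, le_div_iff₀ ht.1]
      linarith
    have : c ≤ 0 := ge_of_tendsto hslope hev
    linarith
  -- connectedness: z vanishes on Ω
  have hzzero : ∀ x ∈ Ω, z x = 0 := by
    intro x hx
    by_contra hne'
    have hxP : x ∈ P := ⟨hx, lt_of_le_of_ne (hz0' x (subset_closure hx)) (Ne.symm hne')⟩
    have hsub : Ω ⊆ Z ∪ P := by
      intro w hw
      rcases (hz0' w (subset_closure hw)).lt_or_eq with h | h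
      · exact Or.inr ⟨hw, h⟩
      · exact Or.inl ⟨hw, h.symm⟩
    obtain ⟨w, hwΩ, hwZ, hwP⟩ := hconn.isPreconnected Z P hZopen hPopen hsub
      ⟨x₀, hx₀Ω, hx₀Ω, hzx₀⟩ ⟨x, hx, hxP⟩
    exact absurd hwZ.2 (ne_of_gt hwP.2)
  -- final contradiction at a boundary point
  haveI : Nonempty (Fin d) := ⟨⟨0, hd⟩⟩
  have hfrne : (frontier Ω).Nonempty := by
    rw [nonempty_iff_ne_empty]
    intro hfr
    have hclop : IsClopen Ω := isClopen_iff_frontier_eq_empty.mpr hfr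
    rcases isClopen_iff.mp hclop with h | h
    · exact absurd h (nonempty_iff_ne_empty.mp hne)
    · obtain ⟨C', hC'⟩ := isBounded_iff_forall_norm_le.mp hbdd
      set w : Euc d := (|C'| + 1) • EuclideanSpace.single ⟨0, hd⟩ (1:ℝ) with hw
      have hwΩ : w ∈ Ω := h ▸ mem_univ w
      have := hC' w hwΩ
      have hn : ‖w‖ = |C'| + 1 := by
        rw [hw, norm_smul, Real.norm_eq_abs, EuclideanSpace.norm_single, norm_one, mul_one,
          abs_of_nonneg (by positivity)]
      rw [hn] at this
      have h2 := le_abs_self C'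
      linarith
  obtain ⟨xb, hxbfr⟩ := hfrne
  have hxbcl : xb ∈ closure Ω := frontier_subset_closure hxbfr
  haveI : (𝓝[Ω] xb).NeBot := mem_closure_iff_nhdsWithin_neBot.mp hxbcl
  have hzclOn : ContinuousOn z (closure Ω) :=
    (continuousOn_const.mul hφc).add (continuousOn_const.mul hψc)
  have h1 : Tendsto z (𝓝[Ω] xb) (𝓝 (z xb)) :=
    (hzclOn xb hxbcl).mono_left (nhdsWithin_mono _ subset_closure)
  have h2 : Tendsto z (𝓝[Ω] xb) (𝓝 0) := by
    have he : ∀ᶠ w in 𝓝[Ω] xb, z w = 0 := by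
      filter_upwards [self_mem_nhdsWithin] with w hw
      exact hzzero w hw
    exact Tendsto.congr' (by filter_upwards [he] with w hw; exact hw.symm) tendsto_const_nhds
  have hzxb : z xb = 0 := tendsto_nhds_unique h1 h2
  have hψxb : ψ xb = 0 := hψ0 xb hxbfr
  have hφxb : 0 < φ xb := hφpos' xb hxbcl
  have : z xb = M * φ xb := by simp only [hz, hψxb]; ring
  rw [hzxb] at this
  nlinarith [hMpos, hφxb]
end
end

section
/- Let d ≥ 1, let Ω ⊂ ℝ^d be a bounded C² domain with outward unit normal ν, let β > 0, and let v : Ω → ℝ^d be a bounded measurable vector field. If (λ, φ) is a Robin eigenpair for (Ω, v, β), then λ > 0. -/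
open MeasureTheory Metric Filter
open scoped RealInnerProductSpace Topology

noncomputable section

variable {d : ℕ}

/-! ### Auxiliary lemmas -/

section Aux

open Set

lemma deriv2_nonpos_of_isLocalMax {g g' : ℝ → ℝ} {c : ℝ}
    (hg : ∀ᶠ t in 𝓝 (0:ℝ), HasDerivAt g (g' t) t)
    (hg' : HasDerivAt g' c 0) (hmax : IsLocalMax g 0) : c ≤ 0 := by
  by_contra hc
  push_neg at hc
  have hg'0 : g' 0 = 0 := hmax.hasDerivAt_eq_zero hg.self_of_nhds
  have hslope := hasDerivAt_iff_tendsto_slope.mp hg'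
  have hpos : ∀ᶠ t in 𝓝[>] (0:ℝ), 0 < g' t := by
    have h1 : ∀ᶠ t in 𝓝[≠] (0:ℝ), 0 < slope g' 0 t :=
      hslope.eventually (eventually_gt_nhds hc)
    have h2 : 𝓝[>] (0:ℝ) ≤ 𝓝[≠] (0:ℝ) :=
      nhdsWithin_mono 0 (fun t ht => ne_of_gt ht)
    filter_upwards [h2 h1, self_mem_nhdsWithin] with t ht ht'
    have hs : slope g' 0 t = g' t / t := by
      simp [slope_def_field, hg'0]
    rw [hs] at ht
    have := mul_pos ht ht'
    rwa [div_mul_cancel₀] at this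
    exact ne_of_gt ht'
  obtain ⟨ε₁, hε₁, h1⟩ := mem_nhdsGT_iff_exists_Ioo_subset.mp hpos
  obtain ⟨ε₂, hε₂, h2⟩ := Metric.eventually_nhds_iff_ball.mp hg
  obtain ⟨ε₃, hε₃, h3⟩ := Metric.eventually_nhds_iff_ball.mp
    (show ∀ᶠ x in 𝓝 (0:ℝ), g x ≤ g 0 from hmax)
  have hε₁' : (0:ℝ) < ε₁ := hε₁
  set b := min ε₁ (min ε₂ ε₃) / 2 with hb
  have hb0 : 0 < b := by positivity
  have hble : b ≤ ε₁ / 2 ∧ b ≤ ε₂ / 2 ∧ b ≤ ε₃ / 2 := by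
    refine ⟨?_, ?_, ?_⟩ <;> rw [hb] <;>
      gcongr <;> simp [min_le_left, min_le_right, le_trans (min_le_right ε₁ _)]
  obtain ⟨hb1, hb2, hb3⟩ := hble
  have hderiv : ∀ t ∈ Ioo (0:ℝ) b, HasDerivAt g (g' t) t := by
    intro t ht
    exact h2 t (by rw [Metric.mem_ball, Real.dist_eq, sub_zero, abs_of_pos ht.1]; linarith [ht.2])
  have hcont : ContinuousOn g (Icc 0 b) := by
    intro t ht
    refine (h2 t ?_).continuousAt.continuousWithinAt
    rw [Metric.mem_ball, Real.dist_eq, sub_zero, abs_of_nonneg ht.1]; linarith [ht.2]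
  obtain ⟨z, hz, hzeq⟩ := exists_hasDerivAt_eq_slope g g' hb0 hcont hderiv
  have hgz : 0 < g' z := h1 ⟨hz.1, by linarith [hz.2]⟩
  have hgb : g b ≤ g 0 := h3 b (by rw [Metric.mem_ball, Real.dist_eq, sub_zero, abs_of_pos hb0]; linarith)
  rw [hzeq] at hgz
  have : (g b - g 0) / (b - 0) ≤ 0 := div_nonpos_of_nonpos_of_nonneg (by linarith) (by linarith)
  linarith

lemma secondDeriv_dir_nonpos {f : Euc d → ℝ} {Ω : Set (Euc d)} (hΩ : IsOpen Ω)
    (hf : ContDiffOn ℝ 2 f Ω) {x : Euc d} (hx : x ∈ Ω) (hmax : IsLocalMax f x)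
    (w : Euc d) : fderiv ℝ (fun y => fderiv ℝ f y w) x w ≤ 0 := by
  set L : ℝ → Euc d := fun t => x + t • w with hL
  have hLc : Continuous L := by fun_prop
  have hL0 : L 0 = x := by simp [hL]
  have hLd : ∀ t : ℝ, HasDerivAt L w t := by
    intro t
    simpa [hL] using ((hasDerivAt_id t).smul_const w).const_add x
  have hC2 : ∀ y ∈ Ω, ContDiffAt ℝ 2 f y := fun y hy =>
    (hf y hy).contDiffAt (hΩ.mem_nhds hy)
  have hdiff : ∀ y ∈ Ω, DifferentiableAt ℝ f y := fun y hy =>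
    (hC2 y hy).differentiableAt (by norm_num)
  set F : Euc d → ℝ := fun y => fderiv ℝ f y w with hF
  have hFd : DifferentiableAt ℝ F x := by
    have h1 : ContDiffAt ℝ 1 (fderiv ℝ f) x := (hC2 x hx).fderiv_right (by norm_num)
    exact (h1.differentiableAt (by norm_num)).clm_apply (differentiableAt_const w)
  have hev : ∀ᶠ t in 𝓝 (0:ℝ), L t ∈ Ω :=
    (hLc.continuousAt (x := (0:ℝ))).preimage_mem_nhds (hΩ.mem_nhds (by rw [hL0]; exact hx))
  have hg : ∀ᶠ t in 𝓝 (0:ℝ), HasDerivAt (f ∘ L) (F (L t)) t := by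
    filter_upwards [hev] with t ht
    exact ((hdiff _ ht).hasFDerivAt).comp_hasDerivAt t (hLd t)
  have hg' : HasDerivAt (F ∘ L) (fderiv ℝ F x w) 0 := by
    have hFx : HasFDerivAt F (fderiv ℝ F x) (L 0) := by rw [hL0]; exact hFd.hasFDerivAt
    exact hFx.comp_hasDerivAt 0 (hLd 0)
  have hmax' : IsLocalMax (f ∘ L) 0 := (hL0 ▸ hmax).comp_continuous (hLc.continuousAt)
  exact deriv2_nonpos_of_isLocalMax hg hg' hmax'

lemma lap_nonpos_of_isLocalMax {f : Euc d → ℝ} {Ω : Set (Euc d)} (hΩ : IsOpen Ω)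
    (hf : ContDiffOn ℝ 2 f Ω) {x : Euc d} (hx : x ∈ Ω) (hmax : IsLocalMax f x) :
    lap f x ≤ 0 :=
  Finset.sum_nonpos fun _ _ => secondDeriv_dir_nonpos hΩ hf hx hmax _

lemma gradient_zero_of_isLocalMax {f : Euc d → ℝ} {x : Euc d}
    (hmax : IsLocalMax f x) : gradient f x = 0 := by
  rw [gradient, hmax.fderiv_eq_zero, map_zero]

/-- The comparison function `x ↦ exp (α xᵢ₀)`. -/
def egF (α : ℝ) (i0 : Fin d) : Euc d → ℝ :=
  fun x => Real.exp (α * (innerSL ℝ (EuclideanSpace.single i0 (1:ℝ)) x))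

lemma egF_pos (α : ℝ) (i0 : Fin d) (x : Euc d) : 0 < egF α i0 x := Real.exp_pos _

lemma egF_contDiff (α : ℝ) (i0 : Fin d) : ContDiff ℝ 2 (egF α i0) := by
  unfold egF
  exact (Real.contDiff_exp.of_le le_top).comp
    (contDiff_const.mul (innerSL ℝ (EuclideanSpace.single i0 (1:ℝ))).contDiff)

lemma egF_continuous (α : ℝ) (i0 : Fin d) : Continuous (egF α i0) :=
  (egF_contDiff α i0).continuous

lemma egF_hasFDerivAt (α : ℝ) (i0 : Fin d) (x : Euc d) :
    HasFDerivAt (egF α i0) ((α * egF α i0 x) • (innerSL ℝ (EuclideanSpace.single i0 (1:ℝ)))) x := by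
  set c := innerSL ℝ (EuclideanSpace.single i0 (1:ℝ))
  have h1 : HasFDerivAt (fun y : Euc d => α * c y) (α • c) x := (c.hasFDerivAt).const_mul α
  have h2 := (Real.hasDerivAt_exp (α * c x)).comp_hasFDerivAt x h1
  have : Real.exp (α * c x) • (α • c) = (α * egF α i0 x) • c := by
    rw [smul_smul, egF]; ring_nf; rfl
  rw [← this]
  exact h2

lemma egF_fderiv (α : ℝ) (i0 : Fin d) (x : Euc d) :
    fderiv ℝ (egF α i0) x = (α * egF α i0 x) • (innerSL ℝ (EuclideanSpace.single i0 (1:ℝ))) :=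
  (egF_hasFDerivAt α i0 x).fderiv

lemma egF_hasGradientAt (α : ℝ) (i0 : Fin d) (x : Euc d) :
    HasGradientAt (egF α i0) ((α * egF α i0 x) • EuclideanSpace.single i0 (1:ℝ)) x := by
  rw [hasGradientAt_iff_hasFDerivAt]
  have : (InnerProductSpace.toDual ℝ (Euc d)) ((α * egF α i0 x) • EuclideanSpace.single i0 (1:ℝ))
      = (α * egF α i0 x) • (innerSL ℝ (EuclideanSpace.single i0 (1:ℝ))) := by
    ext y
    simp [InnerProductSpace.toDual_apply_apply, inner_smul_left]
  rw [this]
  exact egF_hasFDerivAt α i0 x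

lemma egF_gradient (α : ℝ) (i0 : Fin d) (x : Euc d) :
    gradient (egF α i0) x = (α * egF α i0 x) • EuclideanSpace.single i0 (1:ℝ) :=
  (egF_hasGradientAt α i0 x).gradient

lemma egF_secondDeriv (α : ℝ) (i0 : Fin d) (x w : Euc d) :
    fderiv ℝ (fun y => fderiv ℝ (egF α i0) y w) x w
      = α^2 * egF α i0 x * (innerSL ℝ (EuclideanSpace.single i0 (1:ℝ)) w)^2 := by
  set c := innerSL ℝ (EuclideanSpace.single i0 (1:ℝ)) with hc
  have heq : (fun y => fderiv ℝ (egF α i0) y w) = fun y => (α * c w) * egF α i0 y := by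
    funext y
    rw [egF_fderiv]
    simp [hc]
    ring
  rw [heq]
  have h : HasFDerivAt (fun y => (α * c w) * egF α i0 y)
      ((α * c w) • ((α * egF α i0 x) • c)) x := (egF_hasFDerivAt α i0 x).const_mul _
  rw [h.fderiv]
  simp
  ring

lemma egF_lap (α : ℝ) (i0 : Fin d) (x : Euc d) :
    lap (egF α i0) x = α^2 * egF α i0 x := by
  rw [lap]
  have : ∀ i : Fin d, (innerSL ℝ (EuclideanSpace.single i0 (1:ℝ)))
      (EuclideanSpace.single i (1:ℝ)) = if i0 = i then 1 else 0 := by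
    intro i
    simp [EuclideanSpace.inner_single_left, EuclideanSpace.single_apply, eq_comm]
  simp only [egF_secondDeriv, this]
  rw [Finset.sum_eq_single i0] <;> simp +contextual [eq_comm]

section U
variable {Ω : Set (Euc d)} {φ : Euc d → ℝ} (α δ : ℝ) (i0 : Fin d)

lemma u_hasFDerivAt (hΩ : IsOpen Ω) (hφ : ContDiffOn ℝ 2 φ Ω) {y : Euc d} (hy : y ∈ Ω) :
    HasFDerivAt (fun z => φ z + δ * egF α i0 z)
      (fderiv ℝ φ y + δ • ((α * egF α i0 y) • (innerSL ℝ (EuclideanSpace.single i0 (1:ℝ))))) y := by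
  have hφd : DifferentiableAt ℝ φ y :=
    ((hφ y hy).contDiffAt (hΩ.mem_nhds hy)).differentiableAt (by norm_num)
  exact hφd.hasFDerivAt.add ((egF_hasFDerivAt α i0 y).const_mul δ)

lemma u_gradient (hΩ : IsOpen Ω) (hφ : ContDiffOn ℝ 2 φ Ω) {y : Euc d} (hy : y ∈ Ω) :
    gradient (fun z => φ z + δ * egF α i0 z) y
      = gradient φ y + (δ * (α * egF α i0 y)) • EuclideanSpace.single i0 (1:ℝ) := by
  have hφd : DifferentiableAt ℝ φ y :=
    ((hφ y hy).contDiffAt (hΩ.mem_nhds hy)).differentiableAt (by norm_num)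
  apply HasGradientAt.gradient
  rw [hasGradientAt_iff_hasFDerivAt]
  have heq : (InnerProductSpace.toDual ℝ (Euc d))
        (gradient φ y + (δ * (α * egF α i0 y)) • EuclideanSpace.single i0 (1:ℝ))
      = fderiv ℝ φ y + δ • ((α * egF α i0 y) • (innerSL ℝ (EuclideanSpace.single i0 (1:ℝ)))) := by
    have h1 : (InnerProductSpace.toDual ℝ (Euc d)) (gradient φ y) = fderiv ℝ φ y := by
      rw [gradient, LinearIsometryEquiv.apply_symm_apply]
    ext w
    simp only [_root_.map_add, _root_.map_smul, h1, ContinuousLinearMap.add_apply,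
      ContinuousLinearMap.smul_apply, InnerProductSpace.toDual_apply_apply, innerSL_apply_apply,
      inner_smul_left, smul_eq_mul, conj_trivial]
    ring
  rw [heq]
  exact u_hasFDerivAt α δ i0 hΩ hφ hy

lemma u_secondDeriv (hΩ : IsOpen Ω) (hφ : ContDiffOn ℝ 2 φ Ω) {x : Euc d} (hx : x ∈ Ω)
    (w : Euc d) :
    fderiv ℝ (fun y => fderiv ℝ (fun z => φ z + δ * egF α i0 z) y w) x w
      = fderiv ℝ (fun y => fderiv ℝ φ y w) x w
        + δ * (α^2 * egF α i0 x * (innerSL ℝ (EuclideanSpace.single i0 (1:ℝ)) w)^2) := by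
  set c := innerSL ℝ (EuclideanSpace.single i0 (1:ℝ)) with hc
  have hev : (fun y => fderiv ℝ (fun z => φ z + δ * egF α i0 z) y w)
      =ᶠ[𝓝 x] (fun y => fderiv ℝ φ y w + (δ * α * c w) * egF α i0 y) := by
    filter_upwards [hΩ.mem_nhds hx] with y hy
    rw [(u_hasFDerivAt α δ i0 hΩ hφ hy).fderiv]
    simp [hc]
    ring
  rw [hev.fderiv_eq]
  have h1 : DifferentiableAt ℝ (fun y => fderiv ℝ φ y w) x := by
    have := ((hφ x hx).contDiffAt (hΩ.mem_nhds hx)).fderiv_right (m := 1) (by norm_num)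
    exact (this.differentiableAt (by norm_num)).clm_apply (differentiableAt_const w)
  have h2 : HasFDerivAt (fun y => (δ * α * c w) * egF α i0 y)
      ((δ * α * c w) • ((α * egF α i0 x) • c)) x := (egF_hasFDerivAt α i0 x).const_mul _
  have hsum : HasFDerivAt (fun y => fderiv ℝ φ y w + (δ * α * c w) * egF α i0 y)
      (fderiv ℝ (fun y => fderiv ℝ φ y w) x + (δ * α * c w) • ((α * egF α i0 x) • c)) x :=
    h1.hasFDerivAt.add h2
  rw [hsum.fderiv]
  simp
  ring

lemma u_lap (hΩ : IsOpen Ω) (hφ : ContDiffOn ℝ 2 φ Ω) {x : Euc d} (hx : x ∈ Ω) :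
    lap (fun z => φ z + δ * egF α i0 z) x = lap φ x + δ * (α^2 * egF α i0 x) := by
  have hsplit : ∀ i : Fin d,
      fderiv ℝ (fun y => fderiv ℝ (fun z => φ z + δ * egF α i0 z) y (EuclideanSpace.single i 1)) x
        (EuclideanSpace.single i 1)
      = fderiv ℝ (fun y => fderiv ℝ φ y (EuclideanSpace.single i 1)) x (EuclideanSpace.single i 1)
        + δ * (fderiv ℝ (fun y => fderiv ℝ (egF α i0) y (EuclideanSpace.single i 1)) x
            (EuclideanSpace.single i 1)) := by
    intro i
    rw [u_secondDeriv α δ i0 hΩ hφ hx, egF_secondDeriv]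
  unfold lap
  rw [Finset.sum_congr rfl (fun i _ => hsplit i), Finset.sum_add_distrib, ← Finset.mul_sum]
  congr 1
  rw [show (∑ i : Fin d, fderiv ℝ (fun y => fderiv ℝ (egF α i0) y (EuclideanSpace.single i 1)) x
      (EuclideanSpace.single i 1)) = lap (egF α i0) x from rfl, egF_lap]
end U

lemma boundary_penetration {Ω : Set (Euc d)} {ν : Euc d → Euc d}
    (hΩ : IsBoundedC2Domain Ω ν) {y : Euc d} (hy : y ∈ frontier Ω) :
    ‖ν y‖ = 1 ∧ ∃ ε > 0, ∀ t ∈ Ioo (0:ℝ) ε, y - t • ν y ∈ Ω := by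
  obtain ⟨-, -, -, -, hreg⟩ := hΩ
  obtain ⟨r, hr, Φ, hΦ, hgrad, hΩset, hfr, hν⟩ := hreg y hy
  have hyball : y ∈ ball y r := mem_ball_self hr
  have hΦy : Φ y = 0 := by
    have : y ∈ frontier Ω ∩ ball y r := ⟨hy, hyball⟩
    rw [hfr] at this; exact this.2
  have hgy : gradient Φ y ≠ 0 := hgrad y hyball
  have hνy : ν y = ‖gradient Φ y‖⁻¹ • gradient Φ y := hν y ⟨hy, hyball⟩
  have hnorm : ‖ν y‖ = 1 := by
    rw [hνy, norm_smul, norm_inv, norm_norm, inv_mul_cancel₀ (norm_ne_zero_iff.mpr hgy)]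
  refine ⟨hnorm, ?_⟩
  set n := ν y with hn
  have hLd : ∀ t : ℝ, HasDerivAt (fun t : ℝ => y - t • n) (-n) t := by
    intro t
    simpa using (HasDerivAt.const_sub y ((hasDerivAt_id t).smul_const n))
  have hΦd : HasGradientAt Φ (gradient Φ y) y :=
    (hΦ.differentiable (by norm_num) y).hasGradientAt
  have hp : HasDerivAt (fun t : ℝ => Φ (y - t • n)) (-‖gradient Φ y‖) 0 := by
    have h1 := hΦd.hasFDerivAt
    have h2 : HasFDerivAt Φ ((InnerProductSpace.toDual ℝ (Euc d)) (gradient Φ y))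
        (y - (0:ℝ) • n) := by simpa using h1
    have h3 := h2.comp_hasDerivAt 0 (hLd 0)
    have h4 : (InnerProductSpace.toDual ℝ (Euc d)) (gradient Φ y) (-n) = -‖gradient Φ y‖ := by
      rw [InnerProductSpace.toDual_apply_apply, inner_neg_right, hνy, real_inner_smul_right,
        real_inner_self_eq_norm_sq]
      field_simp
    rw [h4] at h3
    exact h3
  have hneg : ∀ᶠ t in 𝓝[>] (0:ℝ), Φ (y - t • n) < 0 := by
    have hslope := hasDerivAt_iff_tendsto_slope.mp hp
    have h1 : ∀ᶠ t in 𝓝[≠] (0:ℝ), slope (fun t : ℝ => Φ (y - t • n)) 0 t < 0 :=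
      hslope.eventually (eventually_lt_nhds (neg_lt_zero.mpr (norm_pos_iff.mpr hgy)))
    have h2 : 𝓝[>] (0:ℝ) ≤ 𝓝[≠] (0:ℝ) := nhdsWithin_mono 0 (fun t ht => ne_of_gt ht)
    filter_upwards [h2 h1, self_mem_nhdsWithin] with t ht ht'
    have hs : slope (fun t : ℝ => Φ (y - t • n)) 0 t = Φ (y - t • n) / t := by
      simp [slope_def_field, hΦy]
    rw [hs] at ht
    have := mul_neg_of_neg_of_pos ht ht'
    rwa [div_mul_cancel₀ _ (ne_of_gt ht')] at this
  have hball : ∀ t ∈ Ioo (0:ℝ) r, y - t • n ∈ ball y r := by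
    intro t ht
    rw [mem_ball, dist_eq_norm]
    have : ‖y - t • n - y‖ = t * ‖n‖ := by
      rw [sub_sub_cancel_left, norm_neg, norm_smul, Real.norm_eq_abs, abs_of_pos ht.1]
    rw [this, hnorm, mul_one]
    exact ht.2
  obtain ⟨ε₁, hε₁, hsub⟩ := mem_nhdsGT_iff_exists_Ioo_subset.mp hneg
  refine ⟨min ε₁ r, lt_min hε₁ hr, fun t ht => ?_⟩
  have h1 : Φ (y - t • n) < 0 := hsub ⟨ht.1, ht.2.trans_le (min_le_left _ _)⟩
  have h2 : y - t • n ∈ ball y r := hball t ⟨ht.1, ht.2.trans_le (min_le_right _ _)⟩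
  have : y - t • n ∈ Ω ∩ ball y r := by rw [hΩset]; exact ⟨h2, h1⟩
  exact this.1

lemma boundary_normal_nonneg {Ω : Set (Euc d)} {u : Euc d → ℝ} {Gu : Euc d → Euc d}
    (hu : ContinuousOn u (closure Ω)) (hGuc : ContinuousOn Gu (closure Ω))
    (hGu : ∀ z ∈ Ω, HasGradientAt u (Gu z) z)
    {y n : Euc d} (hy : y ∈ closure Ω)
    {ε : ℝ} (hε : 0 < ε) (hseg : ∀ t ∈ Ioo (0:ℝ) ε, y - t • n ∈ Ω)
    (hmax : ∀ z ∈ closure Ω, u z ≤ u y) :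
    0 ≤ ⟪Gu y, n⟫ := by
  set L : ℝ → Euc d := fun t => y - t • n with hLdef
  have hL0 : L 0 = y := by simp [hLdef]
  have hLc : Continuous L := by fun_prop
  have hLd : ∀ t : ℝ, HasDerivAt L (-n) t := fun t => by
    simpa using (HasDerivAt.const_sub y ((hasDerivAt_id t).smul_const n))
  have hLmem : ∀ t ∈ Icc (0:ℝ) ε, L t ∈ closure Ω := by
    intro t ht
    rcases eq_or_lt_of_le ht.1 with h | h
    · rw [← h, hL0]; exact hy
    · rcases eq_or_lt_of_le ht.2 with h2 | h2
      · subst h2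
        have : Tendsto L (𝓝[<] t) (𝓝 (L t)) := (hLc.tendsto t).mono_left nhdsWithin_le_nhds
        refine mem_closure_of_tendsto this ?_
        filter_upwards [Ioo_mem_nhdsLT_of_mem (⟨h, le_rfl⟩ : t ∈ Ioc 0 t)] with s hs
        exact show L s ∈ Ω from hseg s ⟨hs.1, hs.2⟩
      · exact subset_closure (hseg t ⟨h, h2⟩)
  have key : ∀ b ∈ Ioo (0:ℝ) ε, ∃ c ∈ Ioo (0:ℝ) b, 0 ≤ ⟪Gu (L c), n⟫ := by
    intro b hb
    have hcont : ContinuousOn (u ∘ L) (Icc 0 b) := by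
      refine hu.comp hLc.continuousOn ?_
      intro t ht
      exact hLmem t ⟨ht.1, ht.2.trans hb.2.le⟩
    have hderiv : ∀ t ∈ Ioo (0:ℝ) b, HasDerivAt (u ∘ L) (-⟪Gu (L t), n⟫) t := by
      intro t ht
      have htΩ : L t ∈ Ω := hseg t ⟨ht.1, ht.2.trans hb.2⟩
      have h1 : HasFDerivAt u ((InnerProductSpace.toDual ℝ (Euc d)) (Gu (L t))) (L t) :=
        (hGu _ htΩ).hasFDerivAt
      have h2 := h1.comp_hasDerivAt t (hLd t)
      have h3 : (InnerProductSpace.toDual ℝ (Euc d)) (Gu (L t)) (-n) = -⟪Gu (L t), n⟫ := by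
        rw [InnerProductSpace.toDual_apply_apply, inner_neg_right]
      rwa [h3] at h2
    obtain ⟨c, hc, hceq⟩ := exists_hasDerivAt_eq_slope (u ∘ L) _ hb.1 hcont hderiv
    refine ⟨c, hc, ?_⟩
    have hub : u (L b) ≤ u (L 0) := by
      rw [hL0]
      exact hmax _ (hLmem b ⟨hb.1.le, hb.2.le⟩)
    have hslope : ((u ∘ L) b - (u ∘ L) 0) / (b - 0) ≤ 0 :=
      div_nonpos_of_nonpos_of_nonneg
        (by simp only [Function.comp_apply]; linarith) (by linarith [hb.1])
    have : -⟪Gu (L c), n⟫ ≤ 0 := by rw [hceq]; exact hslope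
    linarith
  set c : ℕ → ℝ := fun k => Classical.choose (key (min (ε/2) (1/(k+1)))
    ⟨lt_min (by linarith) (by positivity), min_lt_of_left_lt (by linarith)⟩) with hcdef
  have hcspec : ∀ k : ℕ, c k ∈ Ioo (0:ℝ) (min (ε/2) (1/(k+1))) ∧ 0 ≤ ⟪Gu (L (c k)), n⟫ := by
    intro k
    have := Classical.choose_spec (key (min (ε/2) (1/(k+1)))
      ⟨lt_min (by linarith) (by positivity), min_lt_of_left_lt (by linarith)⟩)
    exact ⟨this.1, this.2⟩
  have hc0 : Tendsto c atTop (𝓝 0) := by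
    refine squeeze_zero (g := fun k : ℕ => 1/(k+1)) (fun k => (hcspec k).1.1.le)
      (fun k => (hcspec k).1.2.le.trans (min_le_right _ _))
      tendsto_one_div_add_atTop_nhds_zero_nat
  have hcin : ∀ k, c k ∈ Icc (0:ℝ) ε := fun k =>
    ⟨(hcspec k).1.1.le, ((hcspec k).1.2.trans_le (min_le_left _ _)).le.trans (by linarith)⟩
  have hcw : Tendsto c atTop (𝓝[Icc (0:ℝ) ε] 0) :=
    tendsto_nhdsWithin_of_tendsto_nhds_of_eventually_within c hc0 (Eventually.of_forall hcin)
  have hF : ContinuousWithinAt (fun t => ⟪Gu (L t), n⟫) (Icc (0:ℝ) ε) 0 := by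
    have h1 : ContinuousWithinAt Gu (closure Ω) (L 0) := hGuc _ (hL0 ▸ hy)
    have h2 : ContinuousWithinAt L (Icc (0:ℝ) ε) 0 := hLc.continuousWithinAt
    have h3 : ContinuousWithinAt (Gu ∘ L) (Icc (0:ℝ) ε) 0 :=
      h1.comp h2 (fun t ht => hLmem t ht)
    exact ((continuous_id.inner continuous_const :
        Continuous fun z : Euc d => ⟪z, n⟫).continuousAt).comp_continuousWithinAt h3
  have hlim : Tendsto (fun k => ⟪Gu (L (c k)), n⟫) atTop (𝓝 ⟪Gu (L 0), n⟫) :=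
    (hF.tendsto).comp hcw
  rw [hL0] at hlim
  exact ge_of_tendsto hlim (Eventually.of_forall (fun k => (hcspec k).2))

end Aux

/-- The Robin principal eigenvalue is positive. -/
theorem robin_eigenvalue_pos
    (d : ℕ) (hd : 1 ≤ d) (Ω : Set (Euc d)) (ν : Euc d → Euc d)
    (hΩ : IsBoundedC2Domain Ω ν) (β : ℝ) (hβ : 0 < β)
    (v : Euc d → Euc d) (hmeas : Measurable v) (hbd : ∃ C : ℝ, ∀ x ∈ Ω, ‖v x‖ ≤ C)
    (lam : ℝ) (φ : Euc d → ℝ) (h : IsRobinEigenpair Ω ν v β lam φ) :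
    0 < lam := by
  obtain ⟨hne, hopen, hbdd, hconn, hreg⟩ := id hΩ
  obtain ⟨hφc, hφ2, hφpos, hpde, G, ⟨hGc, hGeq⟩, hrobin⟩ := h
  obtain ⟨C₀, hC⟩ := hbd
  by_contra hlam
  push_neg at hlam
  -- setup of the comparison function
  set i0 : Fin d := ⟨0, hd⟩ with hi0
  have hα0 : (0:ℝ) < max C₀ 0 + 1 := by
    have : (0:ℝ) ≤ max C₀ 0 := le_max_right _ _
    linarith
  set α : ℝ := max C₀ 0 + 1 with hαdef
  have hCα : ∀ x ∈ Ω, ⟪v x, EuclideanSpace.single i0 (1:ℝ)⟫ ≤ α - 1 := by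
    intro x hx
    have h1 : ⟪v x, EuclideanSpace.single i0 (1:ℝ)⟫ ≤ ‖v x‖ * ‖EuclideanSpace.single i0 (1:ℝ)‖ :=
      real_inner_le_norm _ _
    have h2 : ‖EuclideanSpace.single i0 (1:ℝ)‖ = 1 := by
      rw [EuclideanSpace.norm_single, norm_one]
    have h3 := hC x hx
    have h4 : C₀ ≤ max C₀ 0 := le_max_left _ _
    rw [h2, mul_one] at h1
    rw [hαdef]; linarith
  obtain ⟨R, hR⟩ := hbdd.subset_closedBall 0
  have hclR : closure Ω ⊆ closedBall 0 R := closure_minimal hR isClosed_closedBall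
  set K : ℝ := Real.exp (α * R) with hKdef
  have hKpos : 0 < K := Real.exp_pos _
  have hK : ∀ x ∈ closure Ω, egF α i0 x ≤ K := by
    intro x hx
    have hxR : ‖x‖ ≤ R := by
      have := hclR hx
      rwa [mem_closedBall, dist_zero_right] at this
    rw [hKdef]
    apply Real.exp_le_exp.mpr
    have h5 : (innerSL ℝ (EuclideanSpace.single i0 (1:ℝ))) x ≤ ‖x‖ := by
      have := real_inner_le_norm (EuclideanSpace.single i0 (1:ℝ)) x
      simpa [EuclideanSpace.norm_single] using this
    have := mul_le_mul_of_nonneg_left (h5.trans hxR) hα0.le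
    simpa [hαdef] using this
  obtain ⟨xs, hxs⟩ := id hne
  set M : ℝ := φ xs with hMdef
  have hM : 0 < M := hφpos xs hxs
  set δ : ℝ := β * M / (2 * K * (α + β)) with hδdef
  have hδ : 0 < δ := by
    rw [hδdef]
    have h1 : 0 < 2 * K * (α + β) := by positivity
    positivity
  have hδKeq : δ * (K * (α + β)) = β * M / 2 := by
    rw [hδdef]
    field_simp
  set u : Euc d → ℝ := fun z => φ z + δ * egF α i0 z with hu
  have ucont : ContinuousOn u (closure Ω) :=
    hφc.add ((continuous_const.mul (egF_continuous α i0)).continuousOn)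
  have hcompact : IsCompact (closure Ω) := hbdd.isCompact_closure
  have hclne : (closure Ω).Nonempty := ⟨xs, subset_closure hxs⟩
  obtain ⟨z₀, hz₀c, hmax⟩ := hcompact.exists_isMaxOn hclne ucont
  have hmax' : ∀ z ∈ closure Ω, u z ≤ u z₀ := isMaxOn_iff.mp hmax
  by_cases hz₀ : z₀ ∈ Ω
  · -- interior maximum: contradiction with the strict subsolution property
    have hloc : IsLocalMax u z₀ :=
      hmax.isLocalMax (Filter.mem_of_superset (hopen.mem_nhds hz₀) subset_closure)
    have huC2 : ContDiffOn ℝ 2 u Ω :=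
      hφ2.add ((contDiff_const.mul (egF_contDiff α i0)).contDiffOn)
    have hlapu : lap u z₀ ≤ 0 := lap_nonpos_of_isLocalMax hopen huC2 hz₀ hloc
    have hgradu : gradient u z₀ = 0 := gradient_zero_of_isLocalMax hloc
    have hgr : gradient u z₀ = gradient φ z₀
        + (δ * (α * egF α i0 z₀)) • EuclideanSpace.single i0 (1:ℝ) := by
      rw [hu]; exact u_gradient α δ i0 hopen hφ2 hz₀
    have hlap : lap u z₀ = lap φ z₀ + δ * (α^2 * egF α i0 z₀) := by
      rw [hu]; exact u_lap α δ i0 hopen hφ2 hz₀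
    have hφgrad : gradient φ z₀
        = -((δ * (α * egF α i0 z₀)) • EuclideanSpace.single i0 (1:ℝ)) := by
      rw [hgradu] at hgr
      exact eq_neg_of_add_eq_zero_left hgr.symm
    have hinner : ⟪v z₀, gradient φ z₀⟫
        = -((δ * (α * egF α i0 z₀)) * ⟪v z₀, EuclideanSpace.single i0 (1:ℝ)⟫) := by
      rw [hφgrad, inner_neg_right, real_inner_smul_right]
    have hpde0 := hpde z₀ hz₀
    have hegpos := egF_pos α i0 z₀
    have hφp := hφpos z₀ hz₀
    have hve := hCα z₀ hz₀
    set s : ℝ := δ * (α * egF α i0 z₀) with hsdef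
    have hs : 0 < s := by rw [hsdef]; positivity
    have hsve : s * ⟪v z₀, EuclideanSpace.single i0 (1:ℝ)⟫ ≤ s * (α - 1) :=
      mul_le_mul_of_nonneg_left hve hs.le
    have hs2 : δ * (α^2 * egF α i0 z₀) = s * α := by rw [hsdef]; ring
    have hlamφ : lam * φ z₀ ≤ 0 := mul_nonpos_of_nonpos_of_nonneg hlam hφp.le
    -- 0 ≤ -lap u z₀ = -lap φ z₀ - s*α = lam*φ z₀ - ⟪v,∇φ⟫ - s*α
    --   = lam*φ z₀ + s*⟪v,e⟫ - s*α ≤ s*(α-1) - s*α = -s < 0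
    have hring2 : s * (α - 1) = s * α - s := by ring
    clear_value u s δ M K α i0
    linarith [hlapu, hlap, hpde0, hinner, hsve, hs2, hlamφ, hs, hring2]
  · -- boundary maximum: contradiction with the Robin boundary condition
    have hfr : z₀ ∈ frontier Ω := by
      rw [hopen.frontier_eq]; exact ⟨hz₀c, hz₀⟩
    obtain ⟨hνnorm, ε, hε, hseg⟩ :=
      boundary_penetration hΩ hfr
    set Gu : Euc d → Euc d :=
      fun z => G z + (δ * (α * egF α i0 z)) • EuclideanSpace.single i0 (1:ℝ) with hGudef
    have hGuc : ContinuousOn Gu (closure Ω) := by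
      apply hGc.add
      exact ((continuous_const.mul (continuous_const.mul
        (egF_continuous α i0))).smul continuous_const).continuousOn
    have hGugrad : ∀ z ∈ Ω, HasGradientAt u (Gu z) z := by
      intro z hz
      have hφd : DifferentiableAt ℝ φ z :=
        ((hφ2 z hz).contDiffAt (hopen.mem_nhds hz)).differentiableAt (by norm_num)
      have hdiff : DifferentiableAt ℝ u z := by
        rw [hu]
        exact hφd.add (((egF_contDiff α i0).differentiable (by norm_num) z).const_mul δ)
      have hgz := hdiff.hasGradientAt
      have hgval : gradient u z = Gu z := by
        have h1 : gradient u z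
            = gradient φ z + (δ * (α * egF α i0 z)) • EuclideanSpace.single i0 (1:ℝ) := by
          rw [hu]; exact u_gradient α δ i0 hopen hφ2 hz
        rw [h1, show Gu z = G z + (δ * (α * egF α i0 z)) • EuclideanSpace.single i0 (1:ℝ)
          from rfl, hGeq z hz]
      rwa [hgval] at hgz
    have h0 : 0 ≤ ⟪Gu z₀, ν z₀⟫ :=
      boundary_normal_nonneg ucont hGuc hGugrad hz₀c hε hseg hmax'
    have hrob := hrobin z₀ hfr
    have hGsplit : ⟪Gu z₀, ν z₀⟫ = ⟪G z₀, ν z₀⟫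
        + (δ * (α * egF α i0 z₀)) * ⟪EuclideanSpace.single i0 (1:ℝ), ν z₀⟫ := by
      rw [show Gu z₀ = G z₀ + (δ * (α * egF α i0 z₀)) • EuclideanSpace.single i0 (1:ℝ) from rfl,
        inner_add_left, real_inner_smul_left]
    have heν : ⟪EuclideanSpace.single i0 (1:ℝ), ν z₀⟫ ≤ 1 := by
      have h1 := real_inner_le_norm (EuclideanSpace.single i0 (1:ℝ)) (ν z₀)
      rw [EuclideanSpace.norm_single, norm_one, hνnorm, one_mul] at h1
      exact h1
    have hegz : egF α i0 z₀ ≤ K := hK z₀ hz₀c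
    have hegzpos := egF_pos α i0 z₀
    have hegxs := egF_pos α i0 xs
    -- u z₀ ≥ u xs ≥ M hence φ z₀ ≥ M - δ K
    have hu1 : M ≤ u z₀ := by
      have := hmax' xs (subset_closure hxs)
      have h2 : M ≤ u xs := by
        have h3 : u xs = φ xs + δ * egF α i0 xs := rfl
        rw [h3, hMdef]
        nlinarith [hegxs, hδ]
      linarith
    have hφz : M - δ * K ≤ φ z₀ := by
      have h3 : u z₀ = φ z₀ + δ * egF α i0 z₀ := rfl
      have h4 : δ * egF α i0 z₀ ≤ δ * K := mul_le_mul_of_nonneg_left hegz hδ.le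
      linarith
    -- combine
    have hs : 0 < δ * (α * egF α i0 z₀) := by positivity
    have hbound : (δ * (α * egF α i0 z₀)) * ⟪EuclideanSpace.single i0 (1:ℝ), ν z₀⟫
        ≤ δ * (α * K) := by
      have h1 : (δ * (α * egF α i0 z₀)) * ⟪EuclideanSpace.single i0 (1:ℝ), ν z₀⟫
          ≤ δ * (α * egF α i0 z₀) := mul_le_of_le_one_right hs.le heν
      have h2 : α * egF α i0 z₀ ≤ α * K := mul_le_mul_of_nonneg_left hegz hα0.le
      have h3 : δ * (α * egF α i0 z₀) ≤ δ * (α * K) := mul_le_mul_of_nonneg_left h2 hδ.le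
      linarith
    have hβφ : β * (M - δ * K) ≤ β * φ z₀ := mul_le_mul_of_nonneg_left hφz hβ.le
    -- 0 ≤ ⟪G z₀,ν⟫ + bound = -β φ z₀ + bound ≤ -β(M-δK) + δαK = -βM + δK(α+β) = -βM/2 < 0
    have hexp : β * (M - δ * K) = β * M - β * (δ * K) := by ring
    have hring : δ * (α * K) + β * (δ * K) = δ * (K * (α + β)) := by ring
    have hβM : 0 < β * M := by positivity
    clear_value u Gu δ K M α i0
    linarith [h0, hGsplit, hrob, hbound, hβφ, hexp, hring, hδKeq, hβM]
end
end

section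
/- Let d ≥ 1, let Ω ⊂ ℝ^d be a nonempty open set, let v : Ω → ℝ^d be a bounded measurable vector field, let λ > 0, and let φ : Ω → ℝ be twice continuously differentiable with φ > 0 in Ω and -Δφ(x) + v(x)·∇φ(x) = λ φ(x) for every x ∈ Ω. Then the set {x ∈ Ω : ∇φ(x) = 0} has Lebesgue measure zero. -/
open MeasureTheory Metric Filter
open scoped RealInnerProductSpace Topology

noncomputable section

variable {d : ℕ}

/-- The critical set of a positive solution of `-Δφ + v·∇φ = λφ` with `λ > 0` has
Lebesgue measure zero. -/
theorem critical_set_measure_zero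
    (d : ℕ) (hd : 1 ≤ d) (Ω : Set (Euc d)) (hne : Ω.Nonempty) (hop : IsOpen Ω)
    (v : Euc d → Euc d) (hmeas : Measurable v) (hbd : ∃ C : ℝ, ∀ x ∈ Ω, ‖v x‖ ≤ C)
    (lam : ℝ) (hlam : 0 < lam)
    (φ : Euc d → ℝ) (hφ2 : ContDiffOn ℝ 2 φ Ω) (hφpos : ∀ x ∈ Ω, 0 < φ x)
    (heq : ∀ x ∈ Ω, -lap φ x + ⟪v x, gradient φ x⟫ = lam * φ x) :
    volume {x | x ∈ Ω ∧ gradient φ x = 0} = 0 := by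
  classical
  set s : Set (Euc d) := {x | x ∈ Ω ∧ gradient φ x = 0} with hs_def
  -- The gradient is C¹ on Ω
  have hfd : ContDiffOn ℝ 1 (fderiv ℝ φ) Ω :=
    hφ2.fderiv_of_isOpen hop (by norm_num)
  have hg1 : ContDiffOn ℝ 1 (gradient φ) Ω := by
    have : gradient φ = fun x => (InnerProductSpace.toDual ℝ (Euc d)).symm (fderiv ℝ φ x) := rfl
    rw [this]
    exact (LinearIsometryEquiv.contDiff (InnerProductSpace.toDual ℝ (Euc d)).symm).comp_contDiffOn hfd
  have hgdiff : ∀ x ∈ Ω, DifferentiableAt ℝ (gradient φ) x := fun x hx =>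
    (hg1.differentiableOn one_ne_zero).differentiableAt (hop.mem_nhds hx)
  -- s is measurable
  have hU : IsOpen (Ω ∩ (gradient φ) ⁻¹' ({(0 : Euc d)}ᶜ)) :=
    (hg1.continuousOn).isOpen_inter_preimage hop isOpen_compl_singleton
  have hs_eq : s = Ω \ (Ω ∩ (gradient φ) ⁻¹' ({(0 : Euc d)}ᶜ)) := by
    ext x
    simp only [hs_def, Set.mem_setOf_eq, Set.mem_diff, Set.mem_inter_iff, Set.mem_preimage,
      Set.mem_compl_iff, Set.mem_singleton_iff]
    tauto
  have hms : MeasurableSet s := by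
    rw [hs_eq]; exact hop.measurableSet.diff hU.measurableSet
  -- gradient φ approximates the zero linear map on s with constant 0
  have hA : ApproximatesLinearOn (gradient φ) (0 : Euc d →L[ℝ] Euc d) s 0 := by
    intro x hx y hy
    simp [hx.2, hy.2]
  have hder : ∀ x ∈ s, HasFDerivWithinAt (gradient φ) (fderiv ℝ (gradient φ) x) s x :=
    fun x hx => ((hgdiff x hx.1).hasFDerivAt).hasFDerivWithinAt
  have key := hA.norm_fderiv_sub_le volume hms (fun x => fderiv ℝ (gradient φ) x) hder
  -- derive a contradiction a.e. on s
  have hae : ∀ᵐ x ∂(volume.restrict s), False := by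
    filter_upwards [key, ae_restrict_mem hms] with x hx hxs
    have hf'0 : fderiv ℝ (gradient φ) x = 0 := by
      have : ‖fderiv ℝ (gradient φ) x - 0‖₊ = 0 := le_antisymm hx zero_le
      simpa [sub_eq_zero] using nnnorm_eq_zero.mp this
    have hgrad0 : HasFDerivAt (gradient φ) (0 : Euc d →L[ℝ] Euc d) x := by
      have := (hgdiff x hxs.1).hasFDerivAt
      rwa [hf'0] at this
    -- the Laplacian vanishes at x
    have hlap : lap φ x = 0 := by
      unfold lap
      apply Finset.sum_eq_zero
      intro i _
      have hfun : (fun y => fderiv ℝ φ y (EuclideanSpace.single i (1:ℝ)))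
          = fun y => (innerSL ℝ (EuclideanSpace.single i (1:ℝ))) (gradient φ y) := by
        funext y
        have : fderiv ℝ φ y = InnerProductSpace.toDual ℝ (Euc d) (gradient φ y) :=
          ((InnerProductSpace.toDual ℝ (Euc d)).apply_symm_apply (fderiv ℝ φ y)).symm
        rw [this]
        simp [InnerProductSpace.toDual_apply_apply, innerSL_apply_apply, real_inner_comm]
      rw [hfun]
      have hcomp : HasFDerivAt
          (fun y => (innerSL ℝ (EuclideanSpace.single i (1:ℝ))) (gradient φ y))
          ((innerSL ℝ (EuclideanSpace.single i (1:ℝ))).comp (0 : Euc d →L[ℝ] Euc d)) x :=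
        (innerSL ℝ (EuclideanSpace.single i (1:ℝ))).hasFDerivAt.comp x hgrad0
      rw [hcomp.fderiv]
      simp
    -- contradiction with the equation
    have hpde := heq x hxs.1
    rw [hlap, hxs.2] at hpde
    simp only [inner_zero_right, neg_zero, add_zero] at hpde
    have := mul_pos hlam (hφpos x hxs.1)
    linarith
  have : volume.restrict s Set.univ = 0 := by
    have h0 := ae_iff.mp hae
    simpa using h0
  rwa [Measure.restrict_apply_univ] at this
end
end
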